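/- arXiv:2511.10378 — 4 statements merged into one kernel-verified Lean document; each statement's English description precedes it below -/
import Mathlib

section
/- Uniform a priori bounds for the finite volume approximations (Lemma 3.1). Assume (A1) and (A2), let T > 0, p ∈ L⁴(0,T; L²(0,1)), and v₀ ∈ L²(0,1). Then there exists a constant C₁ > 0, depending only on h, b, p, v₀, T and independent of n, such that for every integer n ≥ 3 the approximate solution v^{(n)} of the finite volume scheme satisfies sup_{t∈[0,T]} ‖v^{(n)}(t,·)‖²_{L²(0,1)} ≤ C₁ and ∫₀ᵀ ‖ṽ^{(n)}(t,·)‖²_{L²(0,1)} dt ≤ C₁. -/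
open MeasureTheory

/-- The average of `f` over the cell `V_i = [(i-1)Δx, iΔx)`, `Δx = 1/n`. -/
noncomputable def cellAvg (n : ℕ) (f : ℝ → ℝ) (i : ℕ) : ℝ :=
  (n : ℝ) * ∫ x in (((i:ℝ) - 1) / n)..((i:ℝ) / n), f x

/-- The numerical flux of the semi-discrete finite volume scheme:
`F_i(t) = (v_{i+1} − v_i)/Δx + b((v_i + v_{i+1})/2) p_i(t)` for `1 ≤ i ≤ n−1`
and `F_0 = F_n = 0`, where `Δx = 1/n` and `p_i` is the cell average of `p(t,·)`. -/
noncomputable def fvmFlux (n : ℕ) (b : ℝ → ℝ) (p : ℝ → ℝ → ℝ) (v : ℕ → ℝ → ℝ)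
    (i : ℕ) (t : ℝ) : ℝ :=
  if 1 ≤ i ∧ i ≤ n - 1 then
    (n : ℝ) * (v (i + 1) t - v i t)
      + b ((v i t + v (i + 1) t) / 2) * cellAvg n (fun x => p t x) i
  else 0

/-- `(v, d)` is the (C¹) solution of the semi-discrete finite volume scheme (OP):
`h'(v_i) v_i' = (1/Δx)(F_i − F_{i−1})` on `[0,T]` with `v_i(0)` the cell average of `v₀`. -/
def IsFVMSol (T : ℝ) (n : ℕ) (h' b : ℝ → ℝ) (p : ℝ → ℝ → ℝ) (v₀ : ℝ → ℝ)
    (v d : ℕ → ℝ → ℝ) : Prop :=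
  (∀ i ∈ Finset.Icc 1 n, ContinuousOn (d i) (Set.Icc 0 T)) ∧
  (∀ i ∈ Finset.Icc 1 n, ∀ t ∈ Set.Icc 0 T,
      HasDerivWithinAt (v i) (d i t) (Set.Icc 0 T) t ∧
      h' (v i t) * d i t
        = (n : ℝ) * (fvmFlux n b p v i t - fvmFlux n b p v (i - 1) t)) ∧
  (∀ i ∈ Finset.Icc 1 n, v i 0 = cellAvg n v₀ i)

open MeasureTheory

lemma sqIntLe (a b : ℝ) (hab : a ≤ b) (f : ℝ → ℝ) (h1 : IntervalIntegrable f volume a b)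
    (h2 : IntervalIntegrable (fun x => f x ^ 2) volume a b) :
    (∫ x in a..b, f x) ^ 2 ≤ (b - a) * ∫ x in a..b, f x ^ 2 := by
  rcases eq_or_lt_of_le hab with rfl | hlt
  · simp
  set L : ℝ := b - a with hL
  have hL0 : (0:ℝ) < L := by simp only [hL]; linarith
  set c : ℝ := (∫ x in a..b, f x) / L with hc
  have hcL : c * L = ∫ x in a..b, f x := by rw [hc, div_mul_cancel₀ _ hL0.ne']
  have hnn : 0 ≤ ∫ x in a..b, (f x - c)^2 :=
    intervalIntegral.integral_nonneg hab (fun x _ => sq_nonneg _)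
  have hexp : ∫ x in a..b, (f x - c)^2
      = (∫ x in a..b, f x ^ 2) - 2*c*(∫ x in a..b, f x) + c^2 * L := by
    have e1 : ∫ x in a..b, (f x - c)^2
        = ∫ x in a..b, (f x ^ 2 - (2*c) * f x + c^2) := by
      apply intervalIntegral.integral_congr
      intro x _; ring
    rw [e1, intervalIntegral.integral_add ((h2.sub (h1.const_mul (2*c))))
      intervalIntegrable_const,
      intervalIntegral.integral_sub h2 (h1.const_mul (2*c)),
      intervalIntegral.integral_const_mul, intervalIntegral.integral_const]
    simp only [smul_eq_mul, hL]
    ring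
  nlinarith [hnn, hexp, hcL, hL0, sq_nonneg c,
    mul_le_mul_of_nonneg_left (le_trans (le_of_eq rfl) (hnn.trans_eq hexp)) hL0.le]

lemma iccSumEqRange (k : ℕ) (g : ℕ → ℝ) :
    ∑ i ∈ Finset.Icc 1 k, g i = ∑ i ∈ Finset.range k, g (1+i) := by
  rw [← Finset.Ico_add_one_right_eq_Icc, Finset.sum_Ico_eq_sum_range]
  simp

lemma abelSum (n : ℕ) (hn : 1 ≤ n) (V F : ℕ → ℝ) (hF0 : F 0 = 0) (hFn : F n = 0) :
    ∑ i ∈ Finset.Icc 1 n, V i * (F i - F (i-1))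
      = ∑ i ∈ Finset.Icc 1 (n-1), (V i - V (i+1)) * F i := by
  obtain ⟨m, rfl⟩ : ∃ m, n = m + 1 := ⟨n-1, (Nat.succ_pred_eq_of_pos hn).symm⟩
  simp only [Nat.add_sub_cancel]
  rw [iccSumEqRange, iccSumEqRange]
  have e1 : ∀ i : ℕ, V (1+i) * (F (1+i) - F ((1+i)-1))
      = V (1+i) * F (1+i) - V (1+i) * F i := by
    intro i
    have : (1+i) - 1 = i := by omega
    rw [this]; ring
  simp only [e1]
  rw [Finset.sum_sub_distrib, Finset.sum_range_succ, Finset.sum_range_succ']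
  have hFm : F (1+m) = 0 := by rwa [Nat.add_comm]
  rw [hFm, hF0]
  have e2 : ∀ i : ℕ, V (1+(i+1)) * F (i+1) = V (2+i) * F (1+i) := by
    intro i
    have h1 : 1+(i+1) = 2+i := by omega
    have h2 : i+1 = 1+i := by omega
    rw [h1, h2]
  simp only [e2]
  simp only [mul_zero, add_zero]
  rw [← Finset.sum_sub_distrib]
  apply Finset.sum_congr rfl
  intro i _
  have : 1+i+1 = 2+i := by omega
  rw [this]; ring

lemma sumCells (n : ℕ) (hn : 1 ≤ n) (f : ℝ → ℝ) (hf : IntervalIntegrable f volume 0 1) :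
    ∑ i ∈ Finset.Icc 1 n, ∫ x in (((i:ℝ)-1)/n)..((i:ℝ)/n), f x = ∫ x in (0:ℝ)..1, f x := by
  have hn0 : (0:ℝ) < n := by exact_mod_cast hn
  have hsub : ∀ k : ℕ, k ≤ n → ∀ j : ℕ, j ≤ n →
      Set.uIcc ((k:ℝ)/n) ((j:ℝ)/n) ⊆ Set.uIcc (0:ℝ) 1 := by
    intro k hk j hj
    have h01 : Set.uIcc (0:ℝ) 1 = Set.Icc 0 1 := Set.uIcc_of_le (by norm_num)
    rw [h01]
    apply Set.uIcc_subset_Icc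
    · constructor
      · positivity
      · rw [div_le_one hn0]; exact_mod_cast hk
    · constructor
      · positivity
      · rw [div_le_one hn0]; exact_mod_cast hj
  have key := intervalIntegral.sum_integral_adjacent_intervals
    (a := fun k : ℕ => (k:ℝ)/n) (μ := volume) (f := f) (n := n) ?_
  · rw [iccSumEqRange]
    have e : ∀ i ∈ Finset.range n, (∫ x in ((((1+i:ℕ)):ℝ)-1)/n..(((1+i:ℕ)):ℝ)/n, f x)
        = ∫ x in ((i:ℕ):ℝ)/n..(((i+1:ℕ)):ℝ)/n, f x := by
      intro i _
      congr 1 <;> push_cast <;> ring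
    rw [Finset.sum_congr rfl e, key]
    norm_num [div_self hn0.ne']
  · intro k hk
    exact hf.mono_set (by
      have := hsub k (by omega) (k+1) (by omega)
      exact_mod_cast this)

lemma Hlb (h' : ℝ → ℝ) (hc : Continuous h') (C1 : ℝ) (hb : ∀ s, C1 ≤ h' s) (x : ℝ) :
    C1 * x^2/2 ≤ ∫ s in (0:ℝ)..x, h' s * s := by
  have hint : ∀ a b : ℝ, IntervalIntegrable (fun s => h' s * s) volume a b :=
    fun a b => (hc.mul continuous_id).intervalIntegrable a b
  have hintc : ∀ a b : ℝ, IntervalIntegrable (fun s => C1 * s) volume a b :=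
    fun a b => (continuous_const.mul continuous_id).intervalIntegrable a b
  rcases le_or_gt 0 x with hx | hx
  · have := intervalIntegral.integral_mono_on hx (hintc 0 x) (hint 0 x)
      (fun s hs => mul_le_mul_of_nonneg_right (hb s) hs.1)
    rw [intervalIntegral.integral_const_mul, integral_id] at this
    linarith
  · rw [intervalIntegral.integral_symm x 0]
    have := intervalIntegral.integral_mono_on hx.le (hint x 0) (hintc x 0)
      (fun s hs => mul_le_mul_of_nonpos_right (hb s) hs.2)
    rw [intervalIntegral.integral_const_mul, integral_id] at this
    nlinarith
lemma Hub (h' : ℝ → ℝ) (hc : Continuous h') (C2 : ℝ) (hb : ∀ s, h' s ≤ C2) (x : ℝ) :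
    (∫ s in (0:ℝ)..x, h' s * s) ≤ C2 * x^2/2 := by
  have hint : ∀ a b : ℝ, IntervalIntegrable (fun s => h' s * s) volume a b :=
    fun a b => (hc.mul continuous_id).intervalIntegrable a b
  have hintc : ∀ a b : ℝ, IntervalIntegrable (fun s => C2 * s) volume a b :=
    fun a b => (continuous_const.mul continuous_id).intervalIntegrable a b
  rcases le_or_gt 0 x with hx | hx
  · have := intervalIntegral.integral_mono_on hx (hint 0 x) (hintc 0 x)
      (fun s hs => mul_le_mul_of_nonneg_right (hb s) hs.1)
    rw [intervalIntegral.integral_const_mul, integral_id] at this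
    linarith
  · rw [intervalIntegral.integral_symm x 0]
    have := intervalIntegral.integral_mono_on hx.le (hintc x 0) (hint x 0)
      (fun s hs => mul_le_mul_of_nonpos_right (hb s) hs.2)
    rw [intervalIntegral.integral_const_mul, integral_id] at this
    nlinarith

lemma keyIneq (nn Δ q r bm Cb2 : ℝ) (hn0 : 0 < nn) (hbsq : bm^2 ≤ Cb2^2)
    (hq2 : q^2 ≤ nn * r) :
    (-Δ) * (nn*Δ + bm * q) ≤ -(nn/2) * Δ^2 + (Cb2^2/2)*r := by
  have hkey : 0 ≤ 2*nn * (-(nn/2) * Δ^2 + (Cb2^2/2)*r - ((-Δ) * (nn*Δ + bm * q))) := by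
    nlinarith [sq_nonneg (nn*Δ + bm * q),
      mul_le_mul_of_nonneg_right hbsq (sq_nonneg q),
      mul_le_mul_of_nonneg_left hq2 (sq_nonneg Cb2), hn0]
  have h2 : (0:ℝ) < 2*nn := by linarith
  nlinarith [hkey, h2, mul_pos h2 h2]
lemma cellAvgSqLe (n i : ℕ) (hn : 1 ≤ n) (hi1 : 1 ≤ i) (hin : i ≤ n) (f : ℝ → ℝ)
    (h1 : IntervalIntegrable f volume 0 1)
    (h2 : IntervalIntegrable (fun x => f x ^ 2) volume 0 1) :
    (cellAvg n f i)^2 ≤ (n:ℝ) * ∫ x in (((i:ℝ)-1)/n)..((i:ℝ)/n), f x ^ 2 := by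
  have hn0 : (0:ℝ) < n := by exact_mod_cast hn
  have hi0 : (0:ℝ) ≤ (i:ℝ) - 1 := by
    have : (1:ℝ) ≤ i := by exact_mod_cast hi1
    linarith
  have hin' : (i:ℝ) ≤ n := by exact_mod_cast hin
  have hab : ((i:ℝ)-1)/n ≤ (i:ℝ)/n := by gcongr; linarith
  have hsubu : Set.uIcc (((i:ℝ)-1)/n) ((i:ℝ)/n) ⊆ Set.uIcc (0:ℝ) 1 := by
    rw [Set.uIcc_of_le hab, Set.uIcc_of_le (by norm_num : (0:ℝ) ≤ 1)]
    apply Set.Icc_subset_Icc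
    · positivity
    · rw [div_le_one hn0]; exact hin'
  have key := sqIntLe _ _ hab f (h1.mono_set hsubu) (h2.mono_set hsubu)
  have hBA : ((i:ℝ)/n - ((i:ℝ)-1)/n) = 1/n := by field_simp; ring
  rw [hBA] at key
  rw [cellAvg]
  have hJ : 0 ≤ ∫ x in (((i:ℝ)-1)/n)..((i:ℝ)/n), f x ^ 2 :=
    intervalIntegral.integral_nonneg hab (fun _ _ => sq_nonneg _)
  calc ((n:ℝ) * ∫ x in (((i:ℝ)-1)/n)..((i:ℝ)/n), f x)^2
      = (n:ℝ)^2 * (∫ x in (((i:ℝ)-1)/n)..((i:ℝ)/n), f x)^2 := by ring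
    _ ≤ (n:ℝ)^2 * ((1/n) * ∫ x in (((i:ℝ)-1)/n)..((i:ℝ)/n), f x ^ 2) :=
        mul_le_mul_of_nonneg_left key (by positivity)
    _ = (n:ℝ) * ∫ x in (((i:ℝ)-1)/n)..((i:ℝ)/n), f x ^ 2 := by field_simp
set_option maxHeartbeats 1000000 in
/-- **Uniform a priori bounds for the finite volume approximations (Lemma 3.1).**
Under (A1), (A2), `p ∈ L⁴(0,T;L²(0,1))` and `v₀ ∈ L²(0,1)`, there is `C₁ > 0`
independent of `n ≥ 3` such that the approximate solution satisfies
`sup_{t∈[0,T]} ‖v^{(n)}(t)‖²_{L²(0,1)} ≤ C₁` and `∫₀ᵀ ‖ṽ^{(n)}(t)‖²_{L²(0,1)} dt ≤ C₁`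
(the squared norms being `Δx ∑_{i=1}^n v_i(t)²` and `Δx ∑_{i=2}^n ((v_i − v_{i−1})/Δx)²`). -/
theorem stmt_3
    (T : ℝ) (hT : 0 < T)
    (h h' h'' b b' b'' : ℝ → ℝ) (Ch1 Ch2 Cb1 Cb2 : ℝ)
    (hCh1 : 0 < Ch1) (hCh2 : 0 < Ch2) (hCb1 : 0 < Cb1) (hCb2 : 0 < Cb2)
    (hhderiv : ∀ x : ℝ, HasDerivAt h (h' x) x)
    (hh'deriv : ∀ x : ℝ, HasDerivAt h' (h'' x) x)
    (hh''cont : Continuous h'')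
    (hA1 : ∀ x : ℝ, Ch1 ≤ h' x ∧ h' x ≤ Ch2 ∧ |h'' x| ≤ Ch2)
    (hbderiv : ∀ x : ℝ, HasDerivAt b (b' x) x)
    (hb'deriv : ∀ x : ℝ, HasDerivAt b' (b'' x) x)
    (hb''cont : Continuous b'')
    (hA2 : ∀ x : ℝ, Cb1 ≤ b x ∧ b x ≤ Cb2 ∧ |b' x| ≤ Cb2 ∧ |b'' x| ≤ Cb2)
    (p : ℝ → ℝ → ℝ)
    (hp1 : ∀ t ∈ Set.Icc (0:ℝ) T, IntervalIntegrable (fun x => p t x) volume 0 1)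
    (hp2 : ∀ t ∈ Set.Icc (0:ℝ) T, IntervalIntegrable (fun x => (p t x)^2) volume 0 1)
    (hp4 : IntervalIntegrable (fun t => (∫ x in (0:ℝ)..1, (p t x)^2)^2) volume 0 T)
    (v₀ : ℝ → ℝ)
    (hv₀1 : IntervalIntegrable v₀ volume 0 1)
    (hv₀2 : IntervalIntegrable (fun x => (v₀ x)^2) volume 0 1) :
    ∃ C₁ : ℝ, 0 < C₁ ∧ ∀ n : ℕ, 3 ≤ n → ∀ v d : ℕ → ℝ → ℝ,
      IsFVMSol T n h' b p v₀ v d →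
      (∀ t ∈ Set.Icc (0:ℝ) T,
          (1 / (n:ℝ)) * ∑ i ∈ Finset.Icc 1 n, (v i t)^2 ≤ C₁) ∧
      (∫ t in (0:ℝ)..T, (1 / (n:ℝ)) * ∑ i ∈ Finset.Icc 2 n,
            ((v i t - v (i - 1) t) / (1 / (n:ℝ)))^2) ≤ C₁ := by
  classical
  -- the L² norm of p(t,·) squared
  obtain ⟨Q, hQdef⟩ : ∃ Q : ℝ → ℝ, Q = fun t => ∫ x in (0:ℝ)..1, (p t x)^2 := ⟨_, rfl⟩
  have hQnn : ∀ t, 0 ≤ Q t := fun t => hQdef ▸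
    intervalIntegral.integral_nonneg (by norm_num) (fun x _ => sq_nonneg _)
  have hQsq : IntegrableOn (fun t => (Q t)^2) (Set.Ioc 0 T) volume := by
    rw [hQdef]
    exact (intervalIntegrable_iff_integrableOn_Ioc_of_le hT.le).1 hp4
  have hQmeas : AEStronglyMeasurable Q (volume.restrict (Set.Ioc 0 T)) := by
    have h1 : AEStronglyMeasurable (fun t => Real.sqrt ((Q t)^2))
        (volume.restrict (Set.Ioc 0 T)) :=
      Real.continuous_sqrt.comp_aestronglyMeasurable hQsq.aestronglyMeasurable
    have h2 : (fun t => Real.sqrt ((Q t)^2)) = Q := funext fun t => Real.sqrt_sq (hQnn t)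
    rwa [h2] at h1
  have hQint : IntervalIntegrable Q volume 0 T := by
    rw [intervalIntegrable_iff_integrableOn_Ioc_of_le hT.le]
    have hg : IntegrableOn (fun t => (1 + (Q t)^2)/2) (Set.Ioc 0 T) volume :=
      ((integrableOn_const (C := (1:ℝ)) measure_Ioc_lt_top.ne).add hQsq).div_const 2
    refine hg.mono' hQmeas (Filter.Eventually.of_forall fun t => ?_)
    rw [Real.norm_eq_abs, abs_of_nonneg (hQnn t)]
    nlinarith [sq_nonneg (Q t - 1)]
  have hQTnn : 0 ≤ ∫ t in (0:ℝ)..T, Q t :=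
    intervalIntegral.integral_nonneg hT.le (fun t _ => hQnn t)
  have hv0nn : 0 ≤ ∫ x in (0:ℝ)..1, (v₀ x)^2 :=
    intervalIntegral.integral_nonneg (by norm_num) (fun x _ => sq_nonneg _)
  obtain ⟨B, hBdef⟩ : ∃ B : ℝ, B = (Ch2/2) * (∫ x in (0:ℝ)..1, (v₀ x)^2)
      + (Cb2^2/2) * (∫ t in (0:ℝ)..T, Q t) := ⟨_, rfl⟩
  have hBnn : (0:ℝ) ≤ B := by
    rw [hBdef]
    have := mul_nonneg (by positivity : (0:ℝ) ≤ Ch2/2) hv0nn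
    have := mul_nonneg (by positivity : (0:ℝ) ≤ Cb2^2/2) hQTnn
    linarith
  refine ⟨(2/Ch1)*B + 2*B + 1, ?_, ?_⟩
  · have h1 := mul_nonneg (le_of_lt (show (0:ℝ) < 2/Ch1 by positivity)) hBnn
    nlinarith [h1, hBnn]
  intro n hn v d hsol
  obtain ⟨hd, hode, hiv⟩ := hsol
  have hn1 : 1 ≤ n := by omega
  have hn0 : (0:ℝ) < n := by exact_mod_cast hn1
  have h'cont : Continuous h' :=
    continuous_iff_continuousAt.mpr (fun x => (hh'deriv x).continuousAt)
  obtain ⟨H, hHdef⟩ : ∃ H : ℝ → ℝ, H = fun x => ∫ s in (0:ℝ)..x, h' s * s := ⟨_, rfl⟩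
  have hHderiv : ∀ x : ℝ, HasDerivAt H (h' x * x) x := fun x => hHdef ▸
    intervalIntegral.integral_hasDerivAt_right
      ((h'cont.mul continuous_id).intervalIntegrable 0 x)
      ((h'cont.mul continuous_id).stronglyMeasurableAtFilter volume (nhds x))
      ((h'cont.mul continuous_id).continuousAt)
  have hHcont : Continuous H :=
    continuous_iff_continuousAt.mpr fun x => (hHderiv x).continuousAt
  have hHlbx : ∀ x : ℝ, Ch1 * x^2/2 ≤ H x := fun x => hHdef ▸ Hlb h' h'cont Ch1 (fun s => (hA1 s).1) x
  have hHubx : ∀ x : ℝ, H x ≤ Ch2 * x^2/2 := fun x => hHdef ▸ Hub h' h'cont Ch2 (fun s => (hA1 s).2.1) x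
  have hHnn : ∀ x : ℝ, 0 ≤ H x := fun x => le_trans (by positivity) (hHlbx x)
  obtain ⟨E, hEdef⟩ : ∃ E : ℝ → ℝ, E = fun t => (1/(n:ℝ)) * ∑ i ∈ Finset.Icc 1 n, H (v i t) := ⟨_, rfl⟩
  obtain ⟨φ, hφdef⟩ : ∃ φ : ℝ → ℝ,
      φ = fun t => (1/(n:ℝ)) * ∑ i ∈ Finset.Icc 1 n, h' (v i t) * v i t * d i t := ⟨_, rfl⟩
  obtain ⟨S, hSdef⟩ : ∃ S : ℝ → ℝ,
      S = fun t => ∑ i ∈ Finset.Icc 1 (n-1), (v (i+1) t - v i t)^2 := ⟨_, rfl⟩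
  have hvcont : ∀ i ∈ Finset.Icc 1 n, ContinuousOn (v i) (Set.Icc 0 T) :=
    fun i hi t ht => ((hode i hi t ht).1).continuousWithinAt
  have hmem1 : ∀ i : ℕ, i ∈ Finset.Icc 1 (n-1) →
      i ∈ Finset.Icc 1 n ∧ (i+1) ∈ Finset.Icc 1 n := by
    intro i hi
    simp only [Finset.mem_Icc] at *
    omega
  have hφcont : ContinuousOn φ (Set.Icc 0 T) := by
    simp only [hφdef]
    apply ContinuousOn.mul continuousOn_const
    apply continuousOn_finset_sum
    intro i hi
    exact ((h'cont.comp_continuousOn (hvcont i hi)).mul (hvcont i hi)).mul (hd i hi)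
  have hEcont : ContinuousOn E (Set.Icc 0 T) := by
    simp only [hEdef]
    exact ContinuousOn.mul continuousOn_const
      (continuousOn_finset_sum _ fun i hi => hHcont.comp_continuousOn (hvcont i hi))
  have hScont : ContinuousOn S (Set.Icc 0 T) := by
    simp only [hSdef]
    exact continuousOn_finset_sum _ fun i hi =>
      ((hvcont _ (hmem1 i hi).2).sub (hvcont _ (hmem1 i hi).1)).pow 2
  -- Fundamental theorem of calculus for E
  have hFTC : ∀ t ∈ Set.Icc (0:ℝ) T, (∫ s in (0:ℝ)..t, φ s) = E t - E 0 := by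
    intro t ht
    have hsub : Set.Icc (0:ℝ) t ⊆ Set.Icc 0 T := Set.Icc_subset_Icc le_rfl ht.2
    apply intervalIntegral.integral_eq_sub_of_hasDeriv_right_of_le ht.1 (hEcont.mono hsub)
    · intro x hx
      have hxT : x ∈ Set.Icc (0:ℝ) T := ⟨hx.1.le, le_trans hx.2.le ht.2⟩
      have hnhds : Set.Icc (0:ℝ) T ∈ nhds x :=
        Icc_mem_nhds hx.1 (lt_of_lt_of_le hx.2 ht.2)
      have hder : HasDerivAt E (φ x) x := by
        simp only [hEdef, hφdef]
        apply HasDerivAt.const_mul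
        apply HasDerivAt.fun_sum
        intro i hi
        have hv : HasDerivAt (v i) (d i x) x := ((hode i hi x hxT).1).hasDerivAt hnhds
        exact (hHderiv (v i x)).comp x hv
      exact hder.hasDerivWithinAt
    · exact ((by rw [Set.uIcc_of_le ht.1]; exact hφcont.mono hsub :
        ContinuousOn φ (Set.uIcc 0 t))).intervalIntegrable
  -- pointwise differential inequality
  have hφle : ∀ s ∈ Set.Icc (0:ℝ) T, φ s ≤ -((n:ℝ)/2) * S s + (Cb2^2/2) * Q s := by
    intro s hs
    have hφeq : φ s = ∑ i ∈ Finset.Icc 1 n,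
        v i s * (fvmFlux n b p v i s - fvmFlux n b p v (i-1) s) := by
      have e : ∀ i ∈ Finset.Icc 1 n, h' (v i s) * v i s * d i s
          = (n:ℝ) * (v i s * (fvmFlux n b p v i s - fvmFlux n b p v (i-1) s)) := by
        intro i hi
        have h2 := (hode i hi s hs).2
        calc h' (v i s) * v i s * d i s = v i s * (h' (v i s) * d i s) := by ring
          _ = v i s * ((n:ℝ) * (fvmFlux n b p v i s - fvmFlux n b p v (i-1) s)) := by
              rw [h2]
          _ = _ := by ring
      simp only [hφdef]
      rw [Finset.sum_congr rfl e, ← Finset.mul_sum, ← mul_assoc, one_div,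
        inv_mul_cancel₀ hn0.ne', one_mul]
    have hF0 : fvmFlux n b p v 0 s = 0 := by simp [fvmFlux]
    have hFn : fvmFlux n b p v n s = 0 := by
      rw [fvmFlux, if_neg]
      rintro ⟨-, h2⟩
      omega
    rw [hφeq, abelSum n hn1 (fun i => v i s) (fun i => fvmFlux n b p v i s) hF0 hFn]
    have hterm : ∀ i ∈ Finset.Icc 1 (n-1),
        (v i s - v (i+1) s) * fvmFlux n b p v i s
          ≤ -((n:ℝ)/2) * (v (i+1) s - v i s)^2
            + (Cb2^2/2) * ∫ x in (((i:ℝ)-1)/n)..((i:ℝ)/n), (p s x)^2 := by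
      intro i hi
      have hi' : 1 ≤ i ∧ i ≤ n - 1 := by simpa [Finset.mem_Icc] using hi
      have hFi : fvmFlux n b p v i s = (n:ℝ) * (v (i+1) s - v i s)
          + b ((v i s + v (i+1) s)/2) * cellAvg n (fun x => p s x) i := by
        rw [fvmFlux, if_pos hi']
      have hq2 : (cellAvg n (fun x => p s x) i)^2
          ≤ (n:ℝ) * ∫ x in (((i:ℝ)-1)/n)..((i:ℝ)/n), (p s x)^2 := by
        have := cellAvgSqLe n i hn1 hi'.1 (by omega) (fun x => p s x) (hp1 s hs) (hp2 s hs)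
        simpa using this
      have hbm := hA2 ((v i s + v (i+1) s)/2)
      have hbsq : (b ((v i s + v (i+1) s)/2))^2 ≤ Cb2^2 := by
        nlinarith [hbm.1, hbm.2.1, hCb1]
      have hkey := keyIneq (n:ℝ) (v (i+1) s - v i s) (cellAvg n (fun x => p s x) i)
        (∫ x in (((i:ℝ)-1)/n)..((i:ℝ)/n), (p s x)^2) (b ((v i s + v (i+1) s)/2)) Cb2
        hn0 hbsq hq2
      have hΔ' : v i s - v (i+1) s = -(v (i+1) s - v i s) := by ring
      rw [hFi, hΔ']
      linarith [hkey]
    have hsum1 := Finset.sum_le_sum hterm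
    have hsum2 : ∑ i ∈ Finset.Icc 1 (n-1),
        (-((n:ℝ)/2) * (v (i+1) s - v i s)^2
          + (Cb2^2/2) * ∫ x in (((i:ℝ)-1)/n)..((i:ℝ)/n), (p s x)^2)
        = -((n:ℝ)/2) * S s + (Cb2^2/2) *
            ∑ i ∈ Finset.Icc 1 (n-1), ∫ x in (((i:ℝ)-1)/n)..((i:ℝ)/n), (p s x)^2 := by
      rw [Finset.sum_add_distrib, ← Finset.mul_sum, ← Finset.mul_sum, hSdef]
    have hcellnn : ∀ i ∈ Finset.Icc 1 n,
        (0:ℝ) ≤ ∫ x in (((i:ℝ)-1)/n)..((i:ℝ)/n), (p s x)^2 := by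
      intro i hi
      rw [Finset.mem_Icc] at hi
      have h1 : (1:ℝ) ≤ (i:ℝ) := by exact_mod_cast hi.1
      exact intervalIntegral.integral_nonneg (by gcongr; linarith) (fun x _ => sq_nonneg _)
    have hsum3 : ∑ i ∈ Finset.Icc 1 (n-1), (∫ x in (((i:ℝ)-1)/n)..((i:ℝ)/n), (p s x)^2)
        ≤ Q s := by
      calc ∑ i ∈ Finset.Icc 1 (n-1), (∫ x in (((i:ℝ)-1)/n)..((i:ℝ)/n), (p s x)^2)
          ≤ ∑ i ∈ Finset.Icc 1 n, (∫ x in (((i:ℝ)-1)/n)..((i:ℝ)/n), (p s x)^2) :=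
            Finset.sum_le_sum_of_subset_of_nonneg
              (Finset.Icc_subset_Icc_right (by omega)) (fun i hi _ => hcellnn i hi)
        _ = Q s := by rw [hQdef]; exact sumCells n hn1 _ (hp2 s hs)
    have := mul_le_mul_of_nonneg_left hsum3 (by positivity : (0:ℝ) ≤ Cb2^2/2)
    linarith [hsum1, hsum2.le, hsum2.ge]
  -- main energy estimate
  have hmain : ∀ t ∈ Set.Icc (0:ℝ) T,
      E t + ((n:ℝ)/2) * ∫ s in (0:ℝ)..t, S s ≤ B := by
    intro t ht
    have hsubI : Set.Icc (0:ℝ) t ⊆ Set.Icc 0 T := Set.Icc_subset_Icc le_rfl ht.2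
    have hsubu : Set.uIcc (0:ℝ) t ⊆ Set.uIcc (0:ℝ) T := by
      rw [Set.uIcc_of_le ht.1, Set.uIcc_of_le hT.le]
      exact hsubI
    have hSint : IntervalIntegrable S volume 0 t := by
      apply ContinuousOn.intervalIntegrable
      rw [Set.uIcc_of_le ht.1]
      exact hScont.mono hsubI
    have hQt : IntervalIntegrable Q volume 0 t := hQint.mono_set hsubu
    have hφint : IntervalIntegrable φ volume 0 t := by
      apply ContinuousOn.intervalIntegrable
      rw [Set.uIcc_of_le ht.1]
      exact hφcont.mono hsubI
    have hle := intervalIntegral.integral_mono_on ht.1 hφint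
      ((hSint.const_mul (-((n:ℝ)/2))).add (hQt.const_mul (Cb2^2/2)))
      (fun s hs => hφle s (hsubI hs))
    rw [intervalIntegral.integral_add (hSint.const_mul _) (hQt.const_mul _),
      intervalIntegral.integral_const_mul, intervalIntegral.integral_const_mul,
      hFTC t ht] at hle
    have htT : IntervalIntegrable Q volume t T := hQint.mono_set (by
      rw [Set.uIcc_of_le ht.2, Set.uIcc_of_le hT.le]
      exact Set.Icc_subset_Icc ht.1 le_rfl)
    have hQ1 : (∫ s in (0:ℝ)..t, Q s) ≤ ∫ s in (0:ℝ)..T, Q s := by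
      have hadd := intervalIntegral.integral_add_adjacent_intervals hQt htT
      have h2 : 0 ≤ ∫ s in t..T, Q s :=
        intervalIntegral.integral_nonneg ht.2 (fun s _ => hQnn s)
      linarith
    -- bound on E 0
    have hE0 : E 0 ≤ (Ch2/2) * ∫ x in (0:ℝ)..1, (v₀ x)^2 := by
      have hstep : ∀ i ∈ Finset.Icc 1 n, H (v i 0)
          ≤ (Ch2/2) * ((n:ℝ) * ∫ x in (((i:ℝ)-1)/n)..((i:ℝ)/n), (v₀ x)^2) := by
        intro i hi
        rw [Finset.mem_Icc] at hi
        have h2 : (cellAvg n v₀ i)^2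
            ≤ (n:ℝ) * ∫ x in (((i:ℝ)-1)/n)..((i:ℝ)/n), (v₀ x)^2 := by
          have := cellAvgSqLe n i hn1 hi.1 hi.2 v₀ hv₀1 hv₀2
          simpa using this
        rw [hiv i (by rw [Finset.mem_Icc]; exact hi)]
        have h1 := hHubx (cellAvg n v₀ i)
        nlinarith [h2, hCh2, h1]
      have hsum := Finset.sum_le_sum hstep
      have e : ∑ i ∈ Finset.Icc 1 n,
          (Ch2/2) * ((n:ℝ) * ∫ x in (((i:ℝ)-1)/n)..((i:ℝ)/n), (v₀ x)^2)
          = ((Ch2/2) * (n:ℝ)) *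
            ∑ i ∈ Finset.Icc 1 n, ∫ x in (((i:ℝ)-1)/n)..((i:ℝ)/n), (v₀ x)^2 := by
        rw [Finset.mul_sum]
        exact Finset.sum_congr rfl (fun i _ => by ring)
      rw [e, sumCells n hn1 _ hv₀2] at hsum
      simp only [hEdef]
      calc (1/(n:ℝ)) * ∑ i ∈ Finset.Icc 1 n, H (v i 0)
          ≤ (1/(n:ℝ)) * (((Ch2/2) * (n:ℝ)) * ∫ x in (0:ℝ)..1, (v₀ x)^2) :=
            mul_le_mul_of_nonneg_left hsum (by positivity)
        _ = (Ch2/2) * ∫ x in (0:ℝ)..1, (v₀ x)^2 := by field_simp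
    have hQmul := mul_le_mul_of_nonneg_left hQ1 (by positivity : (0:ℝ) ≤ Cb2^2/2)
    rw [hBdef]
    linarith
  constructor
  · -- sup bound
    intro t ht
    have h1 := hmain t ht
    have hsum := Finset.sum_le_sum (fun i (_ : i ∈ Finset.Icc 1 n) => hHlbx (v i t))
    have e : ∑ i ∈ Finset.Icc 1 n, Ch1 * (v i t)^2/2
        = Ch1/2 * ∑ i ∈ Finset.Icc 1 n, (v i t)^2 := by
      rw [Finset.mul_sum]
      exact Finset.sum_congr rfl (fun i _ => by ring)
    have hEl : Ch1/2 * ((1/(n:ℝ)) * ∑ i ∈ Finset.Icc 1 n, (v i t)^2) ≤ E t := by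
      simp only [hEdef]
      calc Ch1/2 * ((1/(n:ℝ)) * ∑ i ∈ Finset.Icc 1 n, (v i t)^2)
          = (1/(n:ℝ)) * (Ch1/2 * ∑ i ∈ Finset.Icc 1 n, (v i t)^2) := by ring
        _ = (1/(n:ℝ)) * ∑ i ∈ Finset.Icc 1 n, Ch1 * (v i t)^2/2 := by rw [e]
        _ ≤ (1/(n:ℝ)) * ∑ i ∈ Finset.Icc 1 n, H (v i t) :=
            mul_le_mul_of_nonneg_left hsum (by positivity)
    have hIS : 0 ≤ ∫ s in (0:ℝ)..t, S s := by
      apply intervalIntegral.integral_nonneg ht.1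
      intro s _
      simp only [hSdef]
      exact Finset.sum_nonneg fun i _ => sq_nonneg _
    have hIS2 : 0 ≤ ((n:ℝ)/2) * ∫ s in (0:ℝ)..t, S s :=
      mul_nonneg (by positivity) hIS
    have hXB : Ch1/2 * ((1/(n:ℝ)) * ∑ i ∈ Finset.Icc 1 n, (v i t)^2) ≤ B := by
      linarith
    have h2 := mul_le_mul_of_nonneg_left hXB
      (le_of_lt (show (0:ℝ) < 2/Ch1 by positivity))
    have e2 : (2/Ch1)*(Ch1/2 * ((1/(n:ℝ)) * ∑ i ∈ Finset.Icc 1 n, (v i t)^2))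
        = (1/(n:ℝ)) * ∑ i ∈ Finset.Icc 1 n, (v i t)^2 := by
      field_simp
    rw [e2] at h2
    linarith
  · -- gradient bound
    have h1 := hmain T ⟨hT.le, le_rfl⟩
    have hET : 0 ≤ E T := by
      simp only [hEdef]
      exact mul_nonneg (by positivity) (Finset.sum_nonneg fun i _ => hHnn _)
    have heq : ∀ t : ℝ, (1/(n:ℝ)) * ∑ i ∈ Finset.Icc 2 n,
        ((v i t - v (i-1) t)/(1/(n:ℝ)))^2 = (n:ℝ) * S t := by
      intro t
      simp only [hSdef]
      have conv2 : ∑ i ∈ Finset.Icc 2 n, ((v i t - v (i-1) t)/(1/(n:ℝ)))^2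
          = ∑ k ∈ Finset.range (n-1), ((v (2+k) t - v (1+k) t)/(1/(n:ℝ)))^2 := by
        rw [← Finset.Ico_add_one_right_eq_Icc, Finset.sum_Ico_eq_sum_range]
        have hc : n + 1 - 2 = n - 1 := by omega
        rw [hc]
        apply Finset.sum_congr rfl
        intro k _
        have hc2 : 2 + k - 1 = 1 + k := by omega
        rw [hc2]
      rw [conv2, iccSumEqRange (n-1) (fun i => (v (i+1) t - v i t)^2),
        Finset.mul_sum, Finset.mul_sum]
      apply Finset.sum_congr rfl
      intro k _
      have h12 : 1 + k + 1 = 2 + k := by omega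
      rw [h12]
      field_simp
    have hIeq : (∫ t in (0:ℝ)..T, (1/(n:ℝ)) * ∑ i ∈ Finset.Icc 2 n,
          ((v i t - v (i-1) t)/(1/(n:ℝ)))^2) = (n:ℝ) * ∫ t in (0:ℝ)..T, S t := by
      rw [← intervalIntegral.integral_const_mul]
      exact intervalIntegral.integral_congr (fun t _ => heq t)
    rw [hIeq]
    have h2 : ((n:ℝ)/2) * ∫ s in (0:ℝ)..T, S s ≤ B := by linarith
    have h3 := mul_nonneg (le_of_lt (show (0:ℝ) < 2/Ch1 by positivity)) hBnn
    linarith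
end

section
/- Uniform L^∞ bound on the approximate solutions (Lemma 4.2). Assume (A1) and (A2), let T > 0, p ∈ W^{1,2}(0,T; L²(0,1)) ∩ L^∞((0,T)×(0,1)) ∩ L²(0,T; H¹(0,1)), and v₀ ∈ H¹(0,1). Then there exists a constant C₆ > 0, depending only on h, b, p, v₀, T and independent of n, such that for every integer n ≥ 3 the approximate solution v^{(n)} of the finite volume scheme satisfies ess sup_{(t,x)∈(0,T)×(0,1)} |v^{(n)}(t,x)| ≤ C₆. In fact, for every t ∈ [0,T] and every i = 1,…,n, |v_i(t)| ≤ ‖ṽ^{(n)}(t,·)‖_{L²(0,1)} + ‖v^{(n)}(t,·)‖_{L²(0,1)}. -/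
open MeasureTheory intervalIntegral

-- Abel summation identity
private lemma abel_id (F w : ℕ → ℝ) : ∀ N : ℕ, 1 ≤ N →
    ∑ i ∈ Finset.Icc 1 N, (F i - F (i-1)) * w i
      = F N * w N - F 0 * w 1 + ∑ i ∈ Finset.Icc 1 (N-1), F i * (w i - w (i+1)) := by
  intro N
  induction N with
  | zero => omega
  | succ m ih =>
    intro _
    rcases Nat.eq_zero_or_pos m with hm | hm
    · subst hm
      simp [Finset.Icc_self]
      ring
    · obtain ⟨m', rfl⟩ : ∃ m', m = m' + 1 := ⟨m - 1, by omega⟩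
      rw [Finset.sum_Icc_succ_top (by omega : 1 ≤ m' + 1 + 1), ih (by omega)]
      have h2 : m' + 1 + 1 - 1 = m' + 1 := by omega
      rw [h2, Finset.sum_Icc_succ_top (by omega : 1 ≤ m' + 1)]
      simp only [Nat.add_sub_cancel]
      ring

-- reindex: ∑_{k ∈ Icc 2 n} f (k-1) = ∑_{i ∈ Icc 1 (n-1)} f i
private lemma reindex_sum (f : ℕ → ℝ) (n : ℕ) :
    ∑ k ∈ Finset.Icc 2 n, f (k-1) = ∑ i ∈ Finset.Icc 1 (n-1), f i := by
  apply Finset.sum_nbij' (fun k => k - 1) (fun i => i + 1) <;>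
    (intro a ha; simp at ha ⊢ <;> omega)

-- derivative of a primitive of a continuous function
private lemma hasDerivAt_primitive {f : ℝ → ℝ} (hf : Continuous f) (k s : ℝ) :
    HasDerivAt (fun u => ∫ x in k..u, f x) (f s) s :=
  intervalIntegral.integral_hasDerivAt_right (hf.intervalIntegrable _ _)
    (hf.stronglyMeasurable.stronglyMeasurableAtFilter) hf.continuousAt

-- FTC on Icc
private lemma ftc_icc {T : ℝ} {Φ φ : ℝ → ℝ} (hφ : ContinuousOn φ (Set.Icc 0 T))
    (hΦ : ∀ t ∈ Set.Icc 0 T, HasDerivWithinAt Φ (φ t) (Set.Icc 0 T) t) :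
    ∀ t ∈ Set.Icc (0:ℝ) T, Φ t - Φ 0 = ∫ s in (0:ℝ)..t, φ s := by
  intro t ht
  have hsub : Set.Icc (0:ℝ) t ⊆ Set.Icc 0 T := Set.Icc_subset_Icc le_rfl ht.2
  have hint : IntervalIntegrable φ volume 0 t := by
    apply ContinuousOn.intervalIntegrable
    rw [Set.uIcc_of_le ht.1]; exact hφ.mono hsub
  have := intervalIntegral.integral_eq_sub_of_hasDeriv_right_of_le ht.1
    (fun s hs => ((hΦ s (hsub hs)).continuousWithinAt).mono hsub)
    (fun s hs => (hΦ s ⟨hs.1.le, hs.2.le.trans ht.2⟩).mono_of_mem_nhdsWithin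
      (Filter.mem_of_superset (Ioc_mem_nhdsGT_of_mem ⟨le_rfl, lt_of_lt_of_le hs.2 ht.2⟩)
        (fun y hy => ⟨hs.1.le.trans hy.1.le, hy.2⟩)))
    hint
  linarith [this]


-- bounds for G(s) = ∫_k^s h'(u) (u-k)₊ du
private lemma G_bounds {h' : ℝ → ℝ} {Ch1 Ch2 : ℝ} (hh'c : Continuous h')
    (hh'b : ∀ x, Ch1 ≤ h' x ∧ h' x ≤ Ch2) (hCh1 : 0 ≤ Ch1) (k s : ℝ) :
    Ch1/2 * (max (s-k) 0)^2 ≤ (∫ u in k..s, h' u * max (u-k) 0) ∧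
    (∫ u in k..s, h' u * max (u-k) 0) ≤ Ch2/2 * (max (s-k) 0)^2 := by
  have hcont : Continuous (fun u => h' u * max (u-k) 0) := by fun_prop
  have hc1 : Continuous (fun u : ℝ => Ch1 * (u - k)) := by fun_prop
  have hc2 : Continuous (fun u : ℝ => Ch2 * (u - k)) := by fun_prop
  rcases le_or_gt k s with hks | hks
  · have hmax : max (s-k) 0 = s - k := max_eq_left (by linarith)
    have hid : (∫ u in k..s, (u - k)) = (s-k)^2/2 := by
      rw [intervalIntegral.integral_sub intervalIntegrable_id intervalIntegrable_const,
        integral_id, intervalIntegral.integral_const]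
      simp [smul_eq_mul]
      ring
    constructor
    · have hmono := intervalIntegral.integral_mono_on (μ := volume) hks
        (hc1.intervalIntegrable k s)
        (hcont.intervalIntegrable k s)
        (fun u hu => by
          have h1 : max (u-k) 0 = u - k := max_eq_left (by linarith [hu.1])
          rw [h1]
          exact mul_le_mul_of_nonneg_right (hh'b u).1 (by linarith [hu.1]))
      rw [intervalIntegral.integral_const_mul, hid] at hmono
      rw [hmax]; linarith
    · have hmono := intervalIntegral.integral_mono_on (μ := volume) hks
        (hcont.intervalIntegrable k s)
        (hc2.intervalIntegrable k s)
        (fun u hu => by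
          have h1 : max (u-k) 0 = u - k := max_eq_left (by linarith [hu.1])
          rw [h1]
          exact mul_le_mul_of_nonneg_right (hh'b u).2 (by linarith [hu.1]))
      rw [intervalIntegral.integral_const_mul, hid] at hmono
      rw [hmax]; linarith
  · have hzero : (∫ u in k..s, h' u * max (u-k) 0) = 0 := by
      rw [intervalIntegral.integral_congr (g := fun _ => (0:ℝ))
        (fun u hu => by
          rw [Set.uIcc_of_ge hks.le] at hu
          have : max (u-k) 0 = 0 := max_eq_right (by linarith [hu.2])
          simp [this])]
      simp
    have hmax : max (s-k) 0 = 0 := max_eq_right (by linarith)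
    rw [hzero, hmax]
    norm_num

-- increments of h
private lemma h_incr {h h' : ℝ → ℝ} {Ch1 Ch2 : ℝ}
    (hhd : ∀ x, HasDerivAt h (h' x) x) (hh'c : Continuous h')
    (hh'b : ∀ x, Ch1 ≤ h' x ∧ h' x ≤ Ch2) {a b : ℝ} (hab : a ≤ b) :
    Ch1 * (b - a) ≤ h b - h a ∧ h b - h a ≤ Ch2 * (b - a) := by
  have hint : (∫ u in a..b, h' u) = h b - h a :=
    intervalIntegral.integral_eq_sub_of_hasDerivAt (fun x _ => hhd x)
      (hh'c.intervalIntegrable a b)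
  constructor
  · have := intervalIntegral.integral_mono_on (μ := volume) hab
      (_root_.intervalIntegrable_const)
      (hh'c.intervalIntegrable a b) (fun u _ => (hh'b u).1)
    rw [intervalIntegral.integral_const, hint, smul_eq_mul] at this
    linarith
  · have := intervalIntegral.integral_mono_on (μ := volume) hab (hh'c.intervalIntegrable a b)
      (_root_.intervalIntegrable_const) (fun u _ => (hh'b u).2)
    rw [intervalIntegral.integral_const, hint, smul_eq_mul] at this
    linarith

-- pointwise Young–Chebyshev inequality for the flux term
private lemma young_cheb {nr γ δ : ℝ} (hγ : 0 ≤ γ) (hn : 0 < nr) (hδ : 0 < δ)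
    {a b k k' G : ℝ} (hk : k = k' + δ) (hG : |G| ≤ γ) :
    (nr*(b-a) + G) * (max (a-k) 0 - max (b-k) 0)
      ≤ -(nr/2)*(max (b-k) 0 - max (a-k) 0)^2
        + (γ^2/(2*nr*δ^2))*((max (a-k') 0)^2 + (max (b-k') 0)^2) := by
  set wa := max (a-k) 0 with hwa
  set wb := max (b-k) 0 with hwb
  set Δ : ℝ := wb - wa with hΔ
  have fact1 : Δ^2 ≤ (b-a)*Δ := by
    have habs : |Δ| ≤ |b - a| := by
      rw [hΔ, hwa, hwb]
      have := abs_max_sub_max_le_abs (b-k) (a-k) 0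
      simpa [sub_sub_sub_cancel_right] using this
    have hsign : 0 ≤ (b-a)*Δ := by
      rcases le_total a b with hab | hab
      · have h1 : wa ≤ wb := max_le_max (by linarith) le_rfl
        have h2 : 0 ≤ Δ := by simp only [hΔ]; linarith
        exact mul_nonneg (by linarith) h2
      · have h1 : wb ≤ wa := max_le_max (by linarith) le_rfl
        have h2 : Δ ≤ 0 := by simp only [hΔ]; linarith
        nlinarith
    calc Δ^2 = |Δ| * |Δ| := by rw [abs_mul_abs_self]; ring
      _ ≤ |b-a| * |Δ| := mul_le_mul_of_nonneg_right habs (abs_nonneg _)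
      _ = |(b-a)*Δ| := (abs_mul _ _).symm
      _ = (b-a)*Δ := abs_of_nonneg hsign
  have fact2 : γ * |Δ| ≤ (nr/2)*Δ^2 + (γ^2/(2*nr*δ^2))*((max (a-k') 0)^2 + (max (b-k') 0)^2) := by
    rcases eq_or_ne Δ 0 with h0 | h0
    · rw [h0]
      simp only [abs_zero, mul_zero]
      positivity
    · have hone : k < a ∨ k < b := by
        by_contra hcon
        push_neg at hcon
        have h1 : wa = 0 := max_eq_right (by linarith [hcon.1])
        have h2 : wb = 0 := max_eq_right (by linarith [hcon.2])
        exact h0 (by simp [hΔ, h1, h2])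
      have hlow : δ^2 ≤ (max (a-k') 0)^2 + (max (b-k') 0)^2 := by
        rcases hone with hka | hkb
        · have hd : δ ≤ max (a-k') 0 := le_max_of_le_left (by linarith)
          nlinarith [sq_nonneg (max (b-k') 0)]
        · have hd : δ ≤ max (b-k') 0 := le_max_of_le_left (by linarith)
          nlinarith [sq_nonneg (max (a-k') 0)]
      have hyoung : γ * |Δ| ≤ (nr/2)*Δ^2 + γ^2/(2*nr) := by
        have h2 : 2*nr*(γ^2/(2*nr)) = γ^2 := by field_simp
        have key : 2*nr*(γ*|Δ|) ≤ 2*nr*((nr/2)*Δ^2 + γ^2/(2*nr)) := by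
          calc 2*nr*(γ*|Δ|) ≤ nr^2*Δ^2 + γ^2 := by
                nlinarith [sq_nonneg (nr*|Δ| - γ), sq_abs Δ]
            _ = 2*nr*((nr/2)*Δ^2) + γ^2 := by ring
            _ = _ := by rw [mul_add, h2]
        exact le_of_mul_le_mul_left key (by positivity)
      have hc : (0:ℝ) ≤ γ^2/(2*nr*δ^2) := by positivity
      have hm := mul_le_mul_of_nonneg_left hlow hc
      have heq : (γ^2/(2*nr*δ^2))*δ^2 = γ^2/(2*nr) := by
        field_simp
      rw [heq] at hm
      linarith
  have hGΔ : -(G*Δ) ≤ γ * |Δ| := by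
    calc -(G*Δ) ≤ |G*Δ| := neg_le_abs _
      _ = |G| * |Δ| := abs_mul _ _
      _ ≤ γ * |Δ| := mul_le_mul_of_nonneg_right hG (abs_nonneg _)
  calc (nr*(b-a) + G) * (wa - wb) = -(nr*((b-a)*Δ)) - G*Δ := by simp only [hΔ]; ring
    _ ≤ -(nr*Δ^2) + γ * |Δ| := by
        have : nr*Δ^2 ≤ nr*((b-a)*Δ) := mul_le_mul_of_nonneg_left fact1 hn.le
        linarith
    _ ≤ _ := by nlinarith [sq_nonneg Δ]

-- pointwise Chebyshev between levels
private lemma cheb_pt {δ : ℝ} (hδ : 0 < δ) (v k : ℝ) :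
    (max (v-(k+δ)) 0)^2 ≤ (max (v-k) 0)^4 / δ^2 := by
  rcases le_or_gt v (k+δ) with hv | hv
  · have h1 : max (v-(k+δ)) 0 = 0 := max_eq_right (by linarith)
    rw [h1]
    simpa using (by positivity : (0:ℝ) ≤ (max (v-k) 0)^4 / δ^2)
  · have h1 : max (v-(k+δ)) 0 = v-(k+δ) := max_eq_left (by linarith)
    have h2 : max (v-k) 0 = v-k := max_eq_left (by linarith)
    rw [h1, h2, le_div_iff₀ (by positivity : (0:ℝ) < δ^2)]
    have ha : 0 ≤ (v-(k+δ))*δ := mul_nonneg (by linarith) hδ.le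
    have hab : (v-(k+δ))*δ ≤ (v-k)^2 := by nlinarith
    calc (v-(k+δ))^2*δ^2 = ((v-(k+δ))*δ)^2 := by ring
      _ ≤ ((v-k)^2)^2 := by nlinarith
      _ = (v-k)^4 := by ring

-- monotone in level
private lemma level_mono {k k' : ℝ} (h : k ≤ k') (v : ℝ) : max (v-k') 0 ≤ max (v-k) 0 :=
  max_le_max (by linarith) le_rfl


private lemma telescope_sum (w : ℕ → ℝ) : ∀ b a : ℕ, a ≤ b →
    ∑ k ∈ Finset.Icc (a+1) b, (w k - w (k-1)) = w b - w a := by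
  intro b
  induction b with
  | zero => intro a ha; interval_cases a; simp
  | succ m ih =>
    intro a ha
    rcases Nat.eq_or_lt_of_le ha with h | h
    · subst h; rw [Finset.Icc_eq_empty (by omega)]; simp
    · have ha' : a ≤ m := Nat.lt_succ_iff.mp h
      rw [Finset.sum_Icc_succ_top (by omega : a + 1 ≤ m + 1), ih a ha']
      simp only [Nat.add_sub_cancel]
      ring

private lemma discrete_sobolev (n : ℕ) (hn : 3 ≤ n) (w : ℕ → ℝ) {i : ℕ}
    (hi : i ∈ Finset.Icc 1 n) :
    |w i| ≤ Real.sqrt ((1 / (n:ℝ)) * ∑ k ∈ Finset.Icc 2 n, ((w k - w (k - 1)) / (1 / (n:ℝ)))^2)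
      + Real.sqrt ((1 / (n:ℝ)) * ∑ j ∈ Finset.Icc 1 n, (w j)^2) := by
  have hn0 : (0:ℝ) < n := by exact_mod_cast Nat.lt_of_lt_of_le (by norm_num) hn
  obtain ⟨j, hj, hjm⟩ := Finset.exists_min_image (Finset.Icc 1 n) (fun j => (w j)^2)
    ⟨1, by simp; omega⟩
  have hcard : (Finset.Icc 1 n).card = n := by rw [Nat.card_Icc]; omega
  have hjS : (n:ℝ) * (w j)^2 ≤ ∑ j ∈ Finset.Icc 1 n, (w j)^2 := by
    have := Finset.card_nsmul_le_sum (Finset.Icc 1 n) (fun j => (w j)^2) ((w j)^2)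
      (fun k hk => hjm k hk)
    rw [hcard, nsmul_eq_mul] at this
    exact_mod_cast this
  have hwj : |w j| ≤ Real.sqrt ((1 / (n:ℝ)) * ∑ j ∈ Finset.Icc 1 n, (w j)^2) := by
    rw [← Real.sqrt_sq_eq_abs]
    apply Real.sqrt_le_sqrt
    rw [div_mul_eq_mul_div, one_mul, le_div_iff₀ hn0]
    linarith [hjS]
  have key : ∀ a b : ℕ, a ∈ Finset.Icc 1 n → b ∈ Finset.Icc 1 n → a ≤ b →
      |w b - w a| ≤ ∑ k ∈ Finset.Icc 2 n, |w k - w (k-1)| := by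
    intro a b ha hb hab
    rw [← telescope_sum w b a hab]
    refine (Finset.abs_sum_le_sum_abs _ _).trans ?_
    apply Finset.sum_le_sum_of_subset_of_nonneg
    · apply Finset.Icc_subset_Icc
      · simp at ha; omega
      · simp at hb; omega
    · intro k _ _; exact abs_nonneg _
  have htel : |w i - w j| ≤ ∑ k ∈ Finset.Icc 2 n, |w k - w (k-1)| := by
    rcases le_total j i with hji | hij
    · exact key j i hj hi hji
    · rw [abs_sub_comm]; exact key i j hi hj hij
  have hsumsq : (∑ k ∈ Finset.Icc 2 n, |w k - w (k-1)|)^2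
      ≤ (1 / (n:ℝ)) * ∑ k ∈ Finset.Icc 2 n, ((w k - w (k - 1)) / (1 / (n:ℝ)))^2 := by
    have hCS := sq_sum_le_card_mul_sum_sq (s := Finset.Icc 2 n)
      (f := fun k => |w k - w (k-1)|)
    have hcard2 : ((Finset.Icc 2 n).card : ℝ) ≤ (n : ℝ) := by
      rw [Nat.card_Icc]; exact_mod_cast Nat.le_of_lt_succ (by omega)
    have habs : ∀ k ∈ Finset.Icc 2 n, |w k - w (k-1)|^2 = (w k - w (k-1))^2 :=
      fun k _ => sq_abs _
    rw [Finset.sum_congr rfl habs] at hCS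
    have hterm : ∀ k ∈ Finset.Icc 2 n,
        ((w k - w (k - 1)) / (1 / (n:ℝ)))^2 = (n:ℝ)^2 * (w k - w (k-1))^2 := by
      intro k _; rw [div_div_eq_mul_div, div_one, mul_comm]; ring
    rw [Finset.sum_congr rfl hterm, ← Finset.mul_sum]
    have heq : (1 / (n:ℝ)) * ((n:ℝ)^2 * ∑ k ∈ Finset.Icc 2 n, (w k - w (k-1))^2)
        = (n:ℝ) * ∑ k ∈ Finset.Icc 2 n, (w k - w (k-1))^2 := by
      field_simp
    rw [heq]
    calc (∑ k ∈ Finset.Icc 2 n, |w k - w (k-1)|)^2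
        ≤ ((Finset.Icc 2 n).card : ℝ) * ∑ k ∈ Finset.Icc 2 n, (w k - w (k-1))^2 := hCS
      _ ≤ (n:ℝ) * ∑ k ∈ Finset.Icc 2 n, (w k - w (k-1))^2 := by
          apply mul_le_mul_of_nonneg_right hcard2
          exact Finset.sum_nonneg fun k _ => sq_nonneg _
  have hCSsqrt : ∑ k ∈ Finset.Icc 2 n, |w k - w (k-1)|
      ≤ Real.sqrt ((1 / (n:ℝ)) * ∑ k ∈ Finset.Icc 2 n, ((w k - w (k - 1)) / (1 / (n:ℝ)))^2) := by
    rw [← Real.sqrt_sq (Finset.sum_nonneg fun k _ => abs_nonneg _)]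
    exact Real.sqrt_le_sqrt hsumsq
  calc |w i| = |(w i - w j) + w j| := by ring_nf
    _ ≤ |w i - w j| + |w j| := abs_add_le _ _
    _ ≤ _ := add_le_add (htel.trans hCSsqrt) hwj

-- discrete Agmon inequality
private lemma agmon (n : ℕ) (hn : 3 ≤ n) (w : ℕ → ℝ) (hw : ∀ j, 0 ≤ w j) {i : ℕ}
    (hi : i ∈ Finset.Icc 1 n) :
    (w i)^2 ≤ 2*((n:ℝ)*∑ j ∈ Finset.Icc 1 (n-1), (w (j+1) - w j)^2)
      + 2*((∑ j ∈ Finset.Icc 1 n, (w j)^2)/(n:ℝ)) := by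
  have hn0 : (0:ℝ) < n := by exact_mod_cast Nat.lt_of_lt_of_le (by norm_num) hn
  have hds := discrete_sobolev n hn w hi
  set A := (1/(n:ℝ)) * ∑ k ∈ Finset.Icc 2 n, ((w k - w (k-1))/(1/(n:ℝ)))^2 with hA_def
  set B := (1/(n:ℝ)) * ∑ j ∈ Finset.Icc 1 n, (w j)^2 with hB_def
  have hA0 : 0 ≤ A := by
    apply mul_nonneg (by positivity)
    exact Finset.sum_nonneg fun k _ => sq_nonneg _
  have hB0 : 0 ≤ B := by
    apply mul_nonneg (by positivity)
    exact Finset.sum_nonneg fun k _ => sq_nonneg _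
  have hA : A = (n:ℝ) * ∑ j ∈ Finset.Icc 1 (n-1), (w (j+1) - w j)^2 := by
    rw [hA_def]
    have hterm : ∀ k ∈ Finset.Icc 2 n,
        ((w k - w (k - 1)) / (1 / (n:ℝ)))^2 = (fun j => (n:ℝ)^2 * (w (j+1) - w j)^2) (k-1) := by
      intro k hk
      simp only
      have hk2 : 2 ≤ k := (Finset.mem_Icc.mp hk).1
      have hkk : k - 1 + 1 = k := by omega
      rw [hkk, div_div_eq_mul_div, div_one, mul_comm]
      ring
    rw [Finset.sum_congr rfl hterm, reindex_sum (fun j => (n:ℝ)^2 * (w (j+1) - w j)^2) n,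
      ← Finset.mul_sum]
    field_simp
  have hB : B = (∑ j ∈ Finset.Icc 1 n, (w j)^2)/(n:ℝ) := by
    rw [hB_def]; ring
  have h1 : (w i)^2 ≤ (Real.sqrt A + Real.sqrt B)^2 := by
    have := hds
    rw [abs_of_nonneg (hw i)] at this
    exact pow_le_pow_left₀ (hw i) this 2
  have h2 : (Real.sqrt A + Real.sqrt B)^2 ≤ 2*A + 2*B := by
    have e1 : Real.sqrt A ^ 2 = A := Real.sq_sqrt hA0
    have e2 : Real.sqrt B ^ 2 = B := Real.sq_sqrt hB0
    nlinarith [sq_nonneg (Real.sqrt A - Real.sqrt B)]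
  calc (w i)^2 ≤ 2*A + 2*B := h1.trans h2
    _ = _ := by rw [hA, hB]

-- pointwise flux bound for the L² estimate
private lemma flux_pair {nr γ Ch1 Ch2 : ℝ} (hn : 0 < nr) (hγ : 0 ≤ γ) (hCh1 : 0 < Ch1)
    (hC12 : Ch1 ≤ Ch2) {a b G ya yb : ℝ} (hG : |G| ≤ γ)
    (hab1 : a ≤ b → Ch1*(b-a) ≤ yb - ya ∧ yb - ya ≤ Ch2*(b-a))
    (hab2 : b ≤ a → Ch1*(a-b) ≤ ya - yb ∧ ya - yb ≤ Ch2*(a-b)) :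
    (nr*(b-a) + G)*(ya - yb) ≤ γ^2*Ch2^2/(4*nr*Ch1) := by
  have hQ : 4*nr*Ch1*(γ^2*Ch2^2/(4*nr*Ch1)) = γ^2*Ch2^2 := by field_simp
  have hG1 : -γ ≤ G := neg_le_of_abs_le hG
  have hG2 : G ≤ γ := le_of_abs_le hG
  rcases le_total a b with hab | hab
  · obtain ⟨hl, hu⟩ := hab1 hab
    have hx0 : (0:ℝ) ≤ b - a := by linarith
    have hy0 : (0:ℝ) ≤ yb - ya := le_trans (mul_nonneg hCh1.le hx0) hl
    have e1 : nr*(b-a)*(Ch1*(b-a)) ≤ nr*(b-a)*(yb-ya) :=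
      mul_le_mul_of_nonneg_left hl (mul_nonneg hn.le hx0)
    have e2 : (-G)*(yb-ya) ≤ γ*(yb-ya) := mul_le_mul_of_nonneg_right (by linarith) hy0
    have e3 : γ*(yb-ya) ≤ γ*(Ch2*(b-a)) := mul_le_mul_of_nonneg_left hu hγ
    have heq : (nr*(b-a)+G)*(ya-yb) = -(nr*(b-a)*(yb-ya)) + (-G)*(yb-ya) := by ring
    have step1 : (nr*(b-a)+G)*(ya-yb) ≤ -(nr*(b-a)*(Ch1*(b-a))) + γ*(Ch2*(b-a)) := by
      rw [heq]; linarith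
    have step2 : -(nr*(b-a)*(Ch1*(b-a))) + γ*(Ch2*(b-a)) ≤ γ^2*Ch2^2/(4*nr*Ch1) := by
      nlinarith [sq_nonneg (2*nr*Ch1*(b-a) - γ*Ch2), mul_pos hn hCh1]
    exact step1.trans step2
  · obtain ⟨hl, hu⟩ := hab2 hab
    have hx0 : (0:ℝ) ≤ a - b := by linarith
    have hy0 : (0:ℝ) ≤ ya - yb := le_trans (mul_nonneg hCh1.le hx0) hl
    have e1 : nr*(a-b)*(Ch1*(a-b)) ≤ nr*(a-b)*(ya-yb) :=
      mul_le_mul_of_nonneg_left hl (mul_nonneg hn.le hx0)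
    have e3 : γ*(ya-yb) ≤ γ*(Ch2*(a-b)) := mul_le_mul_of_nonneg_left hu hγ
    have e2 : G*(ya-yb) ≤ γ*(ya-yb) := mul_le_mul_of_nonneg_right (by linarith) hy0
    have heq : (nr*(b-a)+G)*(ya-yb) = -(nr*(a-b)*(ya-yb)) + G*(ya-yb) := by ring
    have step1 : (nr*(b-a)+G)*(ya-yb) ≤ -(nr*(a-b)*(Ch1*(a-b))) + γ*(Ch2*(a-b)) := by
      rw [heq]; linarith
    have step2 : -(nr*(a-b)*(Ch1*(a-b))) + γ*(Ch2*(a-b)) ≤ γ^2*Ch2^2/(4*nr*Ch1) := by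
      nlinarith [sq_nonneg (2*nr*Ch1*(a-b) - γ*Ch2), mul_pos hn hCh1]
    exact step1.trans step2

-- |h a - h 0| ≤ Ch2 |a| and Ch1|a| ≤ |h a - h 0|, via increments
private lemma h_bound {h h' : ℝ → ℝ} {Ch1 Ch2 : ℝ}
    (hhd : ∀ x, HasDerivAt h (h' x) x) (hh'c : Continuous h')
    (hh'b : ∀ x, Ch1 ≤ h' x ∧ h' x ≤ Ch2) (hCh1 : 0 < Ch1) (hC12 : Ch1 ≤ Ch2) (a : ℝ) :
    Ch1^2 * a^2 ≤ (h a - h 0)^2 ∧ (h a - h 0)^2 ≤ Ch2^2 * a^2 := by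
  have h_incr : ∀ p q : ℝ, p ≤ q → Ch1 * (q - p) ≤ h q - h p ∧ h q - h p ≤ Ch2 * (q - p) := by
    intro p q hpq
    have hint : (∫ u in p..q, h' u) = h q - h p :=
      intervalIntegral.integral_eq_sub_of_hasDerivAt (fun x _ => hhd x)
        (hh'c.intervalIntegrable p q)
    constructor
    · have := intervalIntegral.integral_mono_on (μ := volume) hpq
        (_root_.intervalIntegrable_const)
        (hh'c.intervalIntegrable p q) (fun u _ => (hh'b u).1)
      rw [intervalIntegral.integral_const, hint, smul_eq_mul] at this
      linarith
    · have := intervalIntegral.integral_mono_on (μ := volume) hpq (hh'c.intervalIntegrable p q)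
        (_root_.intervalIntegrable_const) (fun u _ => (hh'b u).2)
      rw [intervalIntegral.integral_const, hint, smul_eq_mul] at this
      linarith
  rcases le_total 0 a with ha | ha
  · obtain ⟨hl, hu⟩ := h_incr 0 a ha
    have h1 : 0 ≤ Ch1 * a := mul_nonneg hCh1.le ha
    have h2 : Ch1 * a ≤ h a - h 0 := by linarith
    have h3 : h a - h 0 ≤ Ch2 * a := by linarith
    constructor
    · nlinarith [mul_self_le_mul_self h1 h2]
    · nlinarith [mul_self_le_mul_self (h1.trans h2) h3]
  · obtain ⟨hl, hu⟩ := h_incr a 0 ha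
    have h1 : 0 ≤ Ch1 * (-a) := mul_nonneg hCh1.le (by linarith)
    have h2 : Ch1 * (-a) ≤ h 0 - h a := by linarith
    have h3 : h 0 - h a ≤ Ch2 * (-a) := by linarith
    constructor
    · nlinarith [mul_self_le_mul_self h1 h2]
    · nlinarith [mul_self_le_mul_self (h1.trans h2) h3]

private lemma cont_ii {T t : ℝ} {f : ℝ → ℝ} (hf : ContinuousOn f (Set.Icc 0 T))
    (ht : t ∈ Set.Icc 0 T) : IntervalIntegrable f volume 0 t := by
  apply ContinuousOn.intervalIntegrable
  rw [Set.uIcc_of_le ht.1]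
  exact hf.mono (Set.Icc_subset_Icc le_rfl ht.2)

/-- The explicit uniform bound constant for the one-sided estimate. -/
private noncomputable def osK (Ch1 Ch2 γ K₀ T : ℝ) : ℝ :=
  max 1 (max K₀ (8388608 * γ^2 * (2*γ^2+1) * T *
    ((Ch2^2*K₀^2 + T*(γ^2*Ch2^2/(2*Ch1)))/Ch1^2) / Ch1))

set_option maxHeartbeats 4000000

/-- One-sided uniform bound for the abstract finite volume system (discrete De Giorgi). -/
private lemma onesided
    (n : ℕ) (hn : 3 ≤ n) (T : ℝ) (hT : 0 < T)
    (h h' : ℝ → ℝ) (Ch1 Ch2 : ℝ) (hCh1 : 0 < Ch1) (hC12 : Ch1 ≤ Ch2)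
    (hhd : ∀ x, HasDerivAt h (h' x) x) (hh'c : Continuous h')
    (hh'b : ∀ x, Ch1 ≤ h' x ∧ h' x ≤ Ch2)
    (v d F g : ℕ → ℝ → ℝ) (γ K₀ : ℝ) (hγ : 0 ≤ γ) (hK₀ : 0 ≤ K₀)
    (hd : ∀ i ∈ Finset.Icc 1 n, ContinuousOn (d i) (Set.Icc 0 T))
    (hv : ∀ i ∈ Finset.Icc 1 n, ∀ t ∈ Set.Icc 0 T,
        HasDerivWithinAt (v i) (d i t) (Set.Icc 0 T) t)
    (heq : ∀ i ∈ Finset.Icc 1 n, ∀ t ∈ Set.Icc 0 T,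
        h' (v i t) * d i t = (n:ℝ) * (F i t - F (i-1) t))
    (hF0 : ∀ t ∈ Set.Icc 0 T, F 0 t = 0)
    (hFn : ∀ t ∈ Set.Icc 0 T, F n t = 0)
    (hFi : ∀ i ∈ Finset.Icc 1 (n-1), ∀ t ∈ Set.Icc 0 T,
        F i t = (n:ℝ) * (v (i+1) t - v i t) + g i t)
    (hg : ∀ i ∈ Finset.Icc 1 (n-1), ∀ t ∈ Set.Icc 0 T, |g i t| ≤ γ)
    (hv0 : ∀ i ∈ Finset.Icc 1 n, |v i 0| ≤ K₀) :
    ∀ t ∈ Set.Icc 0 T, ∀ i ∈ Finset.Icc 1 n, v i t ≤ 2 * osK Ch1 Ch2 γ K₀ T := by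
  have hn0 : (0:ℝ) < (n:ℝ) := by exact_mod_cast Nat.lt_of_lt_of_le (by norm_num) hn
  have hvc : ∀ i ∈ Finset.Icc 1 n, ContinuousOn (v i) (Set.Icc 0 T) :=
    fun i hi t ht => (hv i hi t ht).continuousWithinAt
  have hmem1n : ∀ i, i ∈ Finset.Icc 1 (n-1) → i ∈ Finset.Icc 1 n ∧ i+1 ∈ Finset.Icc 1 n := by
    intro i hi; simp at hi ⊢; omega
  -- constants
  set cA : ℝ := γ^2*Ch2^2/(2*Ch1) with hcA_def
  have hcA0 : 0 ≤ cA := by positivity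
  set R2 : ℝ := (Ch2^2*K₀^2 + T*cA)/Ch1^2 with hR2_def
  have hR20 : 0 ≤ R2 := by positivity
  set K : ℝ := osK Ch1 Ch2 γ K₀ T with hK_def
  have hK1 : 1 ≤ K := le_max_left _ _
  have hK0 : 0 < K := lt_of_lt_of_le one_pos hK1
  have hKK0 : K₀ ≤ K := le_trans (le_max_left _ _) (le_max_right _ _)
  have hKW : 8388608 * γ^2 * (2*γ^2+1) * T * R2 / Ch1 ≤ K^4 := by
    set W : ℝ := 8388608 * γ^2 * (2*γ^2+1) * T * R2 / Ch1 with hW_def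
    rcases le_total W 1 with hW | hW
    · calc W ≤ 1 := hW
        _ ≤ K^4 := one_le_pow₀ hK1
    · have hKW' : W ≤ K := le_trans (le_max_right _ _) (le_max_right _ _)
      calc W ≤ K := hKW'
        _ ≤ K^4 := le_self_pow₀ hK1 (by norm_num)
  -- levels and gaps
  set lev : ℕ → ℝ := fun m => K*(2 - (1/2:ℝ)^m) with hlev_def
  set dl : ℕ → ℝ := fun m => K*(1/2:ℝ)^m with hdl_def
  have hdlpos : ∀ m, 0 < dl m := fun m => mul_pos hK0 (pow_pos (by norm_num) m)
  have hlev_succ : ∀ m, lev (m+1) = lev m + dl (m+1) := by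
    intro m; simp only [hlev_def, hdl_def]; ring
  have hlev_geK : ∀ m, K ≤ lev m := by
    intro m
    have h1 : (1/2:ℝ)^m ≤ 1 := pow_le_one₀ (by norm_num) (by norm_num)
    simp only [hlev_def]; nlinarith
  have hlev_le2K : ∀ m, lev m ≤ 2*K := by
    intro m
    have h1 : (0:ℝ) ≤ (1/2:ℝ)^m := by positivity
    simp only [hlev_def]; nlinarith
  have hlev_mono : ∀ m, lev m ≤ lev (m+1) := by
    intro m; rw [hlev_succ m]; linarith [hdlpos (m+1)]
  -- truncations and energies
  set w : ℕ → ℕ → ℝ → ℝ := fun m i t => max (v i t - lev m) 0 with hw_def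
  set e : ℕ → ℝ → ℝ := fun m t => ∑ i ∈ Finset.Icc 1 n, (w m i t)^2 with he_def
  set dd : ℕ → ℝ → ℝ := fun m t => ∑ i ∈ Finset.Icc 1 (n-1), (w m (i+1) t - w m i t)^2
    with hdd_def
  set J : ℕ → ℝ := fun m => ∫ s in (0:ℝ)..T, e m s with hJ_def
  have hw0 : ∀ m i t, 0 ≤ w m i t := fun m i t => le_max_right _ _
  have he0 : ∀ m t, 0 ≤ e m t := fun m t => Finset.sum_nonneg fun i _ => sq_nonneg _
  have hdd0 : ∀ m t, 0 ≤ dd m t := fun m t => Finset.sum_nonneg fun i _ => sq_nonneg _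
  have hwcont : ∀ m, ∀ i ∈ Finset.Icc 1 n, ContinuousOn (fun t => w m i t) (Set.Icc 0 T) :=
    fun m i hi => ((hvc i hi).sub continuousOn_const).sup continuousOn_const
  have hecont : ∀ m, ContinuousOn (e m) (Set.Icc 0 T) := by
    intro m
    apply continuousOn_finset_sum
    intro i hi
    exact (hwcont m i hi).pow 2
  have hddcont : ∀ m, ContinuousOn (dd m) (Set.Icc 0 T) := by
    intro m
    apply continuousOn_finset_sum
    intro i hi
    exact (((hwcont m (i+1) (hmem1n i hi).2).sub (hwcont m i (hmem1n i hi).1)).pow 2)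
  have hwmono : ∀ m i t, w (m+1) i t ≤ w m i t :=
    fun m i t => level_mono (hlev_mono m) _
  have hemono : ∀ m t, e (m+1) t ≤ e m t := by
    intro m t
    apply Finset.sum_le_sum
    intro i _
    exact pow_le_pow_left₀ (hw0 (m+1) i t) (hwmono m i t) 2
  have hJmono : ∀ m, J (m+1) ≤ J m := by
    intro m
    apply intervalIntegral.integral_mono_on hT.le
      (cont_ii (hecont (m+1)) ⟨hT.le, le_rfl⟩) (cont_ii (hecont m) ⟨hT.le, le_rfl⟩)
    intro s hs
    exact hemono m s
  have hJ0' : ∀ m, 0 ≤ J m := by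
    intro m
    apply intervalIntegral.integral_nonneg hT.le
    intro s _
    exact he0 m s
  -- Step A : L² bound
  have hL2 : ∀ t ∈ Set.Icc (0:ℝ) T, (∑ i ∈ Finset.Icc 1 n, (v i t)^2) ≤ (n:ℝ) * R2 := by
    have hhcont : Continuous h := by
      rw [continuous_iff_continuousAt]; exact fun x => (hhd x).differentiableAt.continuousAt
    set Φ : ℝ → ℝ := fun t => ∑ i ∈ Finset.Icc 1 n, (h (v i t) - h 0)^2 with hΦ_def
    set φ : ℝ → ℝ := fun t => ∑ i ∈ Finset.Icc 1 n, 2*(h (v i t) - h 0)*(h' (v i t) * d i t)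
      with hφ_def
    have hΦd : ∀ t ∈ Set.Icc (0:ℝ) T, HasDerivWithinAt Φ (φ t) (Set.Icc 0 T) t := by
      intro t ht
      apply HasDerivWithinAt.fun_sum
      intro i hi
      have hvi := hv i hi t ht
      have houter : HasDerivAt (fun y => (y - h 0)^2) (2*(h (v i t) - h 0)) (h (v i t)) := by
        have := ((hasDerivAt_id (h (v i t))).sub_const (h 0)).fun_pow 2
        simpa using this
      exact houter.comp_hasDerivWithinAt t ((hhd (v i t)).comp_hasDerivWithinAt t hvi)
    have hφcont : ContinuousOn φ (Set.Icc 0 T) := by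
      apply continuousOn_finset_sum
      intro i hi
      exact (continuousOn_const.mul ((hhcont.comp_continuousOn (hvc i hi)).sub
        continuousOn_const)).mul ((hh'c.comp_continuousOn (hvc i hi)).mul (hd i hi))
    have hφbound : ∀ s ∈ Set.Icc (0:ℝ) T, φ s ≤ (n:ℝ)*cA := by
      intro s hs
      have hstep : φ s = 2*(n:ℝ) * ∑ i ∈ Finset.Icc 1 n,
          (F i s - F (i-1) s)*(h (v i s) - h 0) := by
        simp only [hφ_def]
        rw [Finset.mul_sum]
        apply Finset.sum_congr rfl
        intro i hi
        rw [heq i hi s hs]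
        ring
      have habel : ∑ i ∈ Finset.Icc 1 n, (F i s - F (i-1) s)*(h (v i s) - h 0)
          = ∑ i ∈ Finset.Icc 1 (n-1), F i s * ((h (v i s) - h 0) - (h (v (i+1) s) - h 0)) := by
        have := abel_id (fun i => F i s) (fun i => h (v i s) - h 0) n (by omega)
        simp only [hF0 s hs, hFn s hs, zero_mul, mul_zero, sub_zero, zero_add] at this
        simpa using this
      have hQ0 : (0:ℝ) ≤ γ^2*Ch2^2/(4*(n:ℝ)*Ch1) := by positivity
      have hperterm : ∀ i ∈ Finset.Icc 1 (n-1),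
          F i s * ((h (v i s) - h 0) - (h (v (i+1) s) - h 0)) ≤ γ^2*Ch2^2/(4*(n:ℝ)*Ch1) := by
        intro i hi
        obtain ⟨hi1, hi2⟩ := hmem1n i hi
        rw [hFi i hi s hs]
        have hfp := flux_pair (nr := (n:ℝ)) (a := v i s) (b := v (i+1) s)
          (ya := h (v i s) - h 0) (yb := h (v (i+1) s) - h 0)
          hn0 hγ hCh1 hC12 (hg i hi s hs)
          (fun hab => by
            have h2 := h_incr hhd hh'c hh'b hab
            exact ⟨by linarith [h2.1], by linarith [h2.2]⟩)
          (fun hab => by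
            have h2 := h_incr hhd hh'c hh'b hab
            exact ⟨by linarith [h2.1], by linarith [h2.2]⟩)
        exact hfp
      have hsumb : ∑ i ∈ Finset.Icc 1 (n-1), F i s * ((h (v i s) - h 0) - (h (v (i+1) s) - h 0))
          ≤ (n:ℝ) * (γ^2*Ch2^2/(4*(n:ℝ)*Ch1)) := by
        calc ∑ i ∈ Finset.Icc 1 (n-1), F i s * ((h (v i s) - h 0) - (h (v (i+1) s) - h 0))
            ≤ ∑ i ∈ Finset.Icc 1 (n-1), γ^2*Ch2^2/(4*(n:ℝ)*Ch1) :=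
              Finset.sum_le_sum hperterm
          _ = ((n-1 : ℕ):ℝ) * (γ^2*Ch2^2/(4*(n:ℝ)*Ch1)) := by
              rw [Finset.sum_const, Nat.card_Icc, nsmul_eq_mul]
              norm_num
          _ ≤ (n:ℝ) * (γ^2*Ch2^2/(4*(n:ℝ)*Ch1)) := by
              apply mul_le_mul_of_nonneg_right _ hQ0
              exact_mod_cast Nat.sub_le n 1
      rw [hstep, habel]
      calc 2*(n:ℝ) * ∑ i ∈ Finset.Icc 1 (n-1), F i s * ((h (v i s) - h 0) - (h (v (i+1) s) - h 0))
          ≤ 2*(n:ℝ) * ((n:ℝ) * (γ^2*Ch2^2/(4*(n:ℝ)*Ch1))) := by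
            apply mul_le_mul_of_nonneg_left hsumb (by positivity)
        _ = (n:ℝ)*cA := by
            rw [hcA_def]
            field_simp
            ring
    -- integrate
    intro t ht
    have hftc := ftc_icc hφcont hΦd t ht
    have hint : (∫ s in (0:ℝ)..t, φ s) ≤ T*((n:ℝ)*cA) := by
      have h1 : (∫ s in (0:ℝ)..t, φ s) ≤ ∫ s in (0:ℝ)..t, (n:ℝ)*cA := by
        apply intervalIntegral.integral_mono_on ht.1
          (cont_ii hφcont ht) (_root_.intervalIntegrable_const)
        intro s hs
        exact hφbound s ⟨hs.1, hs.2.trans ht.2⟩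
      rw [intervalIntegral.integral_const, smul_eq_mul] at h1
      calc (∫ s in (0:ℝ)..t, φ s) ≤ (t-0)*((n:ℝ)*cA) := h1
        _ ≤ T*((n:ℝ)*cA) := by
            apply mul_le_mul_of_nonneg_right _ (by positivity)
            linarith [ht.2]
    have hΦ0 : Φ 0 ≤ (n:ℝ)*(Ch2^2*K₀^2) := by
      simp only [hΦ_def]
      calc ∑ i ∈ Finset.Icc 1 n, (h (v i 0) - h 0)^2
          ≤ ∑ i ∈ Finset.Icc 1 n, Ch2^2*K₀^2 := by
            apply Finset.sum_le_sum
            intro i hi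
            have hb := (h_bound hhd hh'c hh'b hCh1 hC12 (v i 0)).2
            have hv2 : (v i 0)^2 ≤ K₀^2 := by
              have := hv0 i hi
              nlinarith [abs_nonneg (v i 0), sq_abs (v i 0)]
            nlinarith [sq_nonneg Ch2]
        _ = ((n:ℕ):ℝ) * (Ch2^2*K₀^2) := by
            rw [Finset.sum_const, Nat.card_Icc, nsmul_eq_mul]
            norm_num
    have hΦt : Ch1^2 * (∑ i ∈ Finset.Icc 1 n, (v i t)^2) ≤ Φ t := by
      simp only [hΦ_def]
      rw [Finset.mul_sum]
      apply Finset.sum_le_sum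
      intro i _
      exact (h_bound hhd hh'c hh'b hCh1 hC12 (v i t)).1
    have hfinal : Ch1^2 * (∑ i ∈ Finset.Icc 1 n, (v i t)^2)
        ≤ (n:ℝ)*(Ch2^2*K₀^2) + T*((n:ℝ)*cA) := by linarith
    have hfinal2 : ∑ i ∈ Finset.Icc 1 n, (v i t)^2
        ≤ ((n:ℝ)*(Ch2^2*K₀^2) + T*((n:ℝ)*cA))/Ch1^2 := by
      rw [le_div_iff₀ (by positivity : (0:ℝ) < Ch1^2)]
      nlinarith [hfinal]
    calc ∑ i ∈ Finset.Icc 1 n, (v i t)^2 ≤ _ := hfinal2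
      _ = (n:ℝ)*R2 := by rw [hR2_def]; field_simp
  -- J 0 bound
  have hJ0b : J 0 ≤ T*((n:ℝ)*R2) := by
    have hpt : ∀ s ∈ Set.Icc (0:ℝ) T, e 0 s ≤ (n:ℝ)*R2 := by
      intro s hs
      have h1 : e 0 s ≤ ∑ i ∈ Finset.Icc 1 n, (v i s)^2 := by
        apply Finset.sum_le_sum
        intro i _
        have hK' : (0:ℝ) ≤ lev 0 := le_trans hK0.le (hlev_geK 0)
        simp only [hw_def]
        rcases le_or_gt (v i s) (lev 0) with hv' | hv'
        · rw [max_eq_right (by linarith)]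
          nlinarith [sq_nonneg (v i s)]
        · rw [max_eq_left (by linarith)]
          nlinarith
      exact h1.trans (hL2 s hs)
    simp only [hJ_def]
    have h2 : (∫ s in (0:ℝ)..T, e 0 s) ≤ ∫ s in (0:ℝ)..T, (n:ℝ)*R2 := by
      apply intervalIntegral.integral_mono_on hT.le
        (cont_ii (hecont 0) ⟨hT.le, le_rfl⟩) (_root_.intervalIntegrable_const)
      exact hpt
    rw [intervalIntegral.integral_const, smul_eq_mul] at h2
    calc (∫ s in (0:ℝ)..T, e 0 s) ≤ (T-0)*((n:ℝ)*R2) := h2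
      _ = T*((n:ℝ)*R2) := by ring
  -- level-m energy inequality
  have energy : ∀ m, ∀ t ∈ Set.Icc (0:ℝ) T,
      Ch1/2 * e (m+1) t + (n:ℝ)^2/2 * (∫ s in (0:ℝ)..t, dd (m+1) s)
        ≤ γ^2/(dl (m+1))^2 * J m := by
    intro m t ht
    have hδ0 : 0 < dl (m+1) := hdlpos (m+1)
    set E : ℝ → ℝ :=
      fun t => ∑ i ∈ Finset.Icc 1 n, ∫ u in (lev (m+1))..(v i t), h' u * max (u - lev (m+1)) 0
      with hE_def
    set ψ : ℝ → ℝ :=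
      fun t => ∑ i ∈ Finset.Icc 1 n, (h' (v i t) * max (v i t - lev (m+1)) 0) * d i t
      with hψ_def
    have hfcont : Continuous (fun u => h' u * max (u - lev (m+1)) 0) := by fun_prop
    have hEd : ∀ t ∈ Set.Icc (0:ℝ) T, HasDerivWithinAt E (ψ t) (Set.Icc 0 T) t := by
      intro t ht
      apply HasDerivWithinAt.fun_sum
      intro i hi
      exact (hasDerivAt_primitive hfcont (lev (m+1)) (v i t)).comp_hasDerivWithinAt t
        (hv i hi t ht)
    have hψcont : ContinuousOn ψ (Set.Icc 0 T) := by
      apply continuousOn_finset_sum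
      intro i hi
      exact ((hh'c.comp_continuousOn (hvc i hi)).mul
        (((hvc i hi).sub continuousOn_const).sup continuousOn_const)).mul (hd i hi)
    have hψb : ∀ s ∈ Set.Icc (0:ℝ) T,
        ψ s ≤ -((n:ℝ)^2/2) * dd (m+1) s + (γ^2/(dl (m+1))^2) * e m s := by
      intro s hs
      have hstep : ψ s = (n:ℝ) * ∑ i ∈ Finset.Icc 1 n,
          (F i s - F (i-1) s) * max (v i s - lev (m+1)) 0 := by
        simp only [hψ_def]
        rw [Finset.mul_sum]
        apply Finset.sum_congr rfl
        intro i hi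
        calc (h' (v i s) * max (v i s - lev (m+1)) 0) * d i s
            = max (v i s - lev (m+1)) 0 * (h' (v i s) * d i s) := by ring
          _ = max (v i s - lev (m+1)) 0 * ((n:ℝ)*(F i s - F (i-1) s)) := by
              rw [heq i hi s hs]
          _ = (n:ℝ) * ((F i s - F (i-1) s) * max (v i s - lev (m+1)) 0) := by ring
      have habel : ∑ i ∈ Finset.Icc 1 n, (F i s - F (i-1) s) * max (v i s - lev (m+1)) 0
          = ∑ i ∈ Finset.Icc 1 (n-1),
              F i s * (max (v i s - lev (m+1)) 0 - max (v (i+1) s - lev (m+1)) 0) := by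
        have := abel_id (fun i => F i s) (fun i => max (v i s - lev (m+1)) 0) n (by omega)
        simp only [hF0 s hs, hFn s hs, zero_mul, mul_zero, sub_zero, zero_add] at this
        simpa using this
      have hperterm : ∀ i ∈ Finset.Icc 1 (n-1),
          F i s * (max (v i s - lev (m+1)) 0 - max (v (i+1) s - lev (m+1)) 0)
            ≤ -((n:ℝ)/2)*(max (v (i+1) s - lev (m+1)) 0 - max (v i s - lev (m+1)) 0)^2
              + (γ^2/(2*(n:ℝ)*(dl (m+1))^2))
                * ((max (v i s - lev m) 0)^2 + (max (v (i+1) s - lev m) 0)^2) := by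
        intro i hi
        rw [hFi i hi s hs]
        exact young_cheb hγ hn0 hδ0 (hlev_succ m) (hg i hi s hs)
      have hsum1 : ∑ i ∈ Finset.Icc 1 (n-1), (max (v i s - lev m) 0)^2 ≤ e m s := by
        simp only [he_def, hw_def]
        apply Finset.sum_le_sum_of_subset_of_nonneg
        · exact Finset.Icc_subset_Icc le_rfl (by omega)
        · intro i _ _; positivity
      have hsum2 : ∑ i ∈ Finset.Icc 1 (n-1), (max (v (i+1) s - lev m) 0)^2 ≤ e m s := by
        have hre := reindex_sum (fun i => (max (v (i+1) s - lev m) 0)^2) n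
        have hcongr : ∑ k ∈ Finset.Icc 2 n, (max (v k s - lev m) 0)^2
            = ∑ k ∈ Finset.Icc 2 n, (fun i => (max (v (i+1) s - lev m) 0)^2) (k-1) := by
          apply Finset.sum_congr rfl
          intro k hk
          have hk2 : 2 ≤ k := (Finset.mem_Icc.mp hk).1
          have hkk : k - 1 + 1 = k := by omega
          simp only
          rw [hkk]
        rw [← hre, ← hcongr]
        simp only [he_def, hw_def]
        apply Finset.sum_le_sum_of_subset_of_nonneg
        · exact Finset.Icc_subset_Icc (by omega) le_rfl
        · intro i _ _; positivity
      have htotal : ∑ i ∈ Finset.Icc 1 (n-1),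
          F i s * (max (v i s - lev (m+1)) 0 - max (v (i+1) s - lev (m+1)) 0)
            ≤ -((n:ℝ)/2)*dd (m+1) s + (γ^2/(2*(n:ℝ)*(dl (m+1))^2))*(2 * e m s) := by
        calc ∑ i ∈ Finset.Icc 1 (n-1),
            F i s * (max (v i s - lev (m+1)) 0 - max (v (i+1) s - lev (m+1)) 0)
            ≤ ∑ i ∈ Finset.Icc 1 (n-1),
              (-((n:ℝ)/2)*(max (v (i+1) s - lev (m+1)) 0 - max (v i s - lev (m+1)) 0)^2
              + (γ^2/(2*(n:ℝ)*(dl (m+1))^2))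
                * ((max (v i s - lev m) 0)^2 + (max (v (i+1) s - lev m) 0)^2)) :=
              Finset.sum_le_sum hperterm
          _ = -((n:ℝ)/2)*(∑ i ∈ Finset.Icc 1 (n-1),
                (max (v (i+1) s - lev (m+1)) 0 - max (v i s - lev (m+1)) 0)^2)
              + (γ^2/(2*(n:ℝ)*(dl (m+1))^2))
                * ((∑ i ∈ Finset.Icc 1 (n-1), (max (v i s - lev m) 0)^2)
                  + (∑ i ∈ Finset.Icc 1 (n-1), (max (v (i+1) s - lev m) 0)^2)) := by
              rw [Finset.sum_add_distrib, ← Finset.mul_sum, ← Finset.mul_sum,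
                Finset.sum_add_distrib]
          _ ≤ _ := by
              have hc : (0:ℝ) ≤ γ^2/(2*(n:ℝ)*(dl (m+1))^2) := by positivity
              have hddeq : (∑ i ∈ Finset.Icc 1 (n-1),
                  (max (v (i+1) s - lev (m+1)) 0 - max (v i s - lev (m+1)) 0)^2) = dd (m+1) s := by
                simp only [hdd_def, hw_def]
              rw [hddeq]
              have := mul_le_mul_of_nonneg_left (add_le_add hsum1 hsum2) hc
              linarith
      rw [hstep, habel]
      have hfin := mul_le_mul_of_nonneg_left htotal hn0.le
      calc (n:ℝ) * ∑ i ∈ Finset.Icc 1 (n-1),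
          F i s * (max (v i s - lev (m+1)) 0 - max (v (i+1) s - lev (m+1)) 0)
          ≤ (n:ℝ) * (-((n:ℝ)/2)*dd (m+1) s + (γ^2/(2*(n:ℝ)*(dl (m+1))^2))*(2 * e m s)) := hfin
        _ = -((n:ℝ)^2/2) * dd (m+1) s + (γ^2/(dl (m+1))^2) * e m s := by
            field_simp
    -- E(0) = 0 and lower bound for E
    have hv0K : ∀ i ∈ Finset.Icc 1 n, v i 0 ≤ lev (m+1) := by
      intro i hi
      have h1 := hv0 i hi
      have h2 := le_abs_self (v i 0)
      linarith [hlev_geK (m+1), hKK0]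
    have hE0 : E 0 = 0 := by
      simp only [hE_def]
      apply Finset.sum_eq_zero
      intro i hi
      have hb := G_bounds hh'c hh'b hCh1.le (lev (m+1)) (v i 0)
      have hmax0 : max (v i 0 - lev (m+1)) 0 = 0 := max_eq_right (by linarith [hv0K i hi])
      rw [hmax0] at hb
      simp only [ne_eq, OfNat.ofNat_ne_zero, not_false_eq_true, zero_pow, mul_zero] at hb
      linarith [hb.1, hb.2]
    have hElb : Ch1/2 * e (m+1) t ≤ E t := by
      simp only [hE_def, he_def, hw_def]
      rw [Finset.mul_sum]
      apply Finset.sum_le_sum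
      intro i _
      exact (G_bounds hh'c hh'b hCh1.le (lev (m+1)) (v i t)).1
    -- integrate
    have hEftc := ftc_icc hψcont hEd t ht
    rw [hE0, sub_zero] at hEftc
    have hboundcont : ContinuousOn
        (fun s => -((n:ℝ)^2/2) * dd (m+1) s + (γ^2/(dl (m+1))^2) * e m s) (Set.Icc 0 T) :=
      (continuousOn_const.mul (hddcont (m+1))).add (continuousOn_const.mul (hecont m))
    have hintb : (∫ s in (0:ℝ)..t, ψ s)
        ≤ ∫ s in (0:ℝ)..t, (-((n:ℝ)^2/2) * dd (m+1) s + (γ^2/(dl (m+1))^2) * e m s) := by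
      apply intervalIntegral.integral_mono_on ht.1 (cont_ii hψcont ht) (cont_ii hboundcont ht)
      intro s hs
      exact hψb s ⟨hs.1, hs.2.trans ht.2⟩
    have hsplit : (∫ s in (0:ℝ)..t, (-((n:ℝ)^2/2) * dd (m+1) s + (γ^2/(dl (m+1))^2) * e m s))
        = -((n:ℝ)^2/2) * (∫ s in (0:ℝ)..t, dd (m+1) s)
          + (γ^2/(dl (m+1))^2) * (∫ s in (0:ℝ)..t, e m s) := by
      rw [intervalIntegral.integral_add
        ((cont_ii (hddcont (m+1)) ht).const_mul _) ((cont_ii (hecont m) ht).const_mul _),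
        intervalIntegral.integral_const_mul, intervalIntegral.integral_const_mul]
    have hJmb : (∫ s in (0:ℝ)..t, e m s) ≤ J m := by
      simp only [hJ_def]
      apply intervalIntegral.integral_mono_interval le_rfl ht.1 ht.2
      · exact MeasureTheory.ae_of_all _ (fun s => he0 m s)
      · exact cont_ii (hecont m) ⟨hT.le, le_rfl⟩
    have hc2 : (0:ℝ) ≤ γ^2/(dl (m+1))^2 := by positivity
    have h5 := mul_le_mul_of_nonneg_left hJmb hc2
    have h6 : E t ≤ -((n:ℝ)^2/2) * (∫ s in (0:ℝ)..t, dd (m+1) s)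
        + (γ^2/(dl (m+1))^2) * J m := by
      rw [hEftc]
      calc (∫ s in (0:ℝ)..t, ψ s)
          ≤ -((n:ℝ)^2/2) * (∫ s in (0:ℝ)..t, dd (m+1) s)
            + (γ^2/(dl (m+1))^2) * (∫ s in (0:ℝ)..t, e m s) := by rw [← hsplit]; exact hintb
        _ ≤ _ := by linarith
    linarith [hElb]
  -- consequences of the energy inequality
  have hsup : ∀ m, ∀ t ∈ Set.Icc (0:ℝ) T,
      e (m+1) t ≤ 2*γ^2/(Ch1*(dl (m+1))^2) * J m := by
    intro m t ht
    have h1 := energy m t ht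
    have h2 : (0:ℝ) ≤ (n:ℝ)^2/2 * (∫ s in (0:ℝ)..t, dd (m+1) s) :=
      mul_nonneg (by positivity)
        (intervalIntegral.integral_nonneg ht.1 fun s _ => hdd0 (m+1) s)
    have h3 : Ch1/2 * e (m+1) t ≤ γ^2/(dl (m+1))^2 * J m := by linarith
    have h4 : e (m+1) t = (2/Ch1) * (Ch1/2 * e (m+1) t) := by field_simp
    rw [h4]
    calc (2/Ch1) * (Ch1/2 * e (m+1) t) ≤ (2/Ch1) * (γ^2/(dl (m+1))^2 * J m) :=
          mul_le_mul_of_nonneg_left h3 (by positivity)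
      _ = 2*γ^2/(Ch1*(dl (m+1))^2) * J m := by
          field_simp
  have hdint : ∀ m, (∫ s in (0:ℝ)..T, dd (m+1) s) ≤ 2*γ^2/((n:ℝ)^2*(dl (m+1))^2) * J m := by
    intro m
    have h1 := energy m T ⟨hT.le, le_rfl⟩
    have h2 : (0:ℝ) ≤ Ch1/2 * e (m+1) T := mul_nonneg (by positivity) (he0 _ _)
    have h3 : (n:ℝ)^2/2 * (∫ s in (0:ℝ)..T, dd (m+1) s) ≤ γ^2/(dl (m+1))^2 * J m := by linarith
    have h4 : (∫ s in (0:ℝ)..T, dd (m+1) s)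
        = (2/(n:ℝ)^2) * ((n:ℝ)^2/2 * (∫ s in (0:ℝ)..T, dd (m+1) s)) := by
      field_simp
    rw [h4]
    calc (2/(n:ℝ)^2) * ((n:ℝ)^2/2 * (∫ s in (0:ℝ)..T, dd (m+1) s))
        ≤ (2/(n:ℝ)^2) * (γ^2/(dl (m+1))^2 * J m) :=
          mul_le_mul_of_nonneg_left h3 (by positivity)
      _ = 2*γ^2/((n:ℝ)^2*(dl (m+1))^2) * J m := by
          field_simp
  -- power identities
  have hdlsq : ∀ m', (dl m')^2 = K^2/(4:ℝ)^m' := by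
    intro m'
    simp only [hdl_def]
    have hhalf : ((1/2:ℝ)^m')^2 = (1/4:ℝ)^m' := by
      rw [← pow_mul, show (1/4:ℝ) = (1/2)^2 by norm_num, ← pow_mul, Nat.mul_comm]
    rw [mul_pow, hhalf, one_div_pow]
    ring
  -- the recursion
  set C0 : ℝ := 1024*γ^2*(2*γ^2+1)/(Ch1*K^4) with hC0_def
  have hC00 : 0 ≤ C0 := by positivity
  have hrec : ∀ m, J (m+2) ≤ C0 * 64^m * (J m)^2 / (n:ℝ) := by
    intro m
    set A : ℝ := (4:ℝ)^m with hA_def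
    have hA1 : (1:ℝ) ≤ A := one_le_pow₀ (by norm_num)
    have hA0 : (0:ℝ) < A := lt_of_lt_of_le one_pos hA1
    have hd1 : (dl (m+1))^2 = K^2/(4*A) := by
      rw [hdlsq (m+1), pow_succ]
      ring
    have hd2 : (dl (m+2))^2 = K^2/(16*A) := by
      rw [hdlsq (m+2), pow_succ, pow_succ]
      ring
    have h64 : (64:ℝ)^m = A^3 := by
      rw [hA_def, ← pow_mul, show (64:ℝ) = 4^3 by norm_num, ← pow_mul, Nat.mul_comm]
    set S : ℝ := 2*γ^2/(Ch1*(dl (m+1))^2) * J m with hS_def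
    have hS0 : 0 ≤ S := by
      apply mul_nonneg (by positivity) (hJ0' m)
    -- pointwise chebyshev+agmon bound
    have hpt : ∀ s ∈ Set.Icc (0:ℝ) T,
        e (m+2) s ≤ (2/(dl (m+2))^2) * ((n:ℝ)*S*dd (m+1) s + (S/(n:ℝ))*e (m+1) s) := by
      intro s hs
      have hcheb : ∀ i ∈ Finset.Icc 1 n,
          (w (m+2) i s)^2 ≤ (w (m+1) i s)^4/(dl (m+2))^2 := by
        intro i _
        simp only [hw_def]
        have hc := cheb_pt (hdlpos (m+2)) (v i s) (lev (m+1))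
        rw [← hlev_succ (m+1)] at hc
        exact hc
      have hagmon : ∀ i ∈ Finset.Icc 1 n,
          (w (m+1) i s)^2 ≤ 2*((n:ℝ)*dd (m+1) s) + 2*(e (m+1) s/(n:ℝ)) := by
        intro i hi
        have ha := agmon n hn (fun j => w (m+1) j s) (fun j => hw0 (m+1) j s) hi
        simpa [hdd_def, he_def] using ha
      have hper : ∀ i ∈ Finset.Icc 1 n,
          (w (m+2) i s)^2 ≤ (1/(dl (m+2))^2)
            * ((2*((n:ℝ)*dd (m+1) s) + 2*(e (m+1) s/(n:ℝ))) * (w (m+1) i s)^2) := by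
        intro i hi
        calc (w (m+2) i s)^2 ≤ (w (m+1) i s)^4/(dl (m+2))^2 := hcheb i hi
          _ = (1/(dl (m+2))^2) * ((w (m+1) i s)^2 * (w (m+1) i s)^2) := by ring
          _ ≤ _ := by
              apply mul_le_mul_of_nonneg_left _ (by positivity)
              exact mul_le_mul_of_nonneg_right (hagmon i hi) (sq_nonneg _)
      have hsume : e (m+2) s ≤ (1/(dl (m+2))^2)
          * ((2*((n:ℝ)*dd (m+1) s) + 2*(e (m+1) s/(n:ℝ))) * e (m+1) s) := by
        calc e (m+2) s ≤ ∑ i ∈ Finset.Icc 1 n, (1/(dl (m+2))^2)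
            * ((2*((n:ℝ)*dd (m+1) s) + 2*(e (m+1) s/(n:ℝ))) * (w (m+1) i s)^2) :=
              Finset.sum_le_sum hper
          _ = _ := by
              rw [← Finset.mul_sum, ← Finset.mul_sum]
      have heS : e (m+1) s ≤ S := hsup m s hs
      have hee0 : 0 ≤ e (m+1) s := he0 _ _
      have hdd0' : 0 ≤ dd (m+1) s := hdd0 _ _
      calc e (m+2) s ≤ (1/(dl (m+2))^2)
          * ((2*((n:ℝ)*dd (m+1) s) + 2*(e (m+1) s/(n:ℝ))) * e (m+1) s) := hsume
        _ ≤ (2/(dl (m+2))^2) * ((n:ℝ)*S*dd (m+1) s + (S/(n:ℝ))*e (m+1) s) := by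
            have expand : (1/(dl (m+2))^2)
                * ((2*((n:ℝ)*dd (m+1) s) + 2*(e (m+1) s/(n:ℝ))) * e (m+1) s)
                = (2/(dl (m+2))^2) * ((n:ℝ)*dd (m+1) s*e (m+1) s
                  + (e (m+1) s/(n:ℝ))*e (m+1) s) := by ring
            rw [expand]
            apply mul_le_mul_of_nonneg_left _ (by positivity)
            have t1 : (n:ℝ)*dd (m+1) s*e (m+1) s ≤ (n:ℝ)*S*dd (m+1) s := by
              calc (n:ℝ)*dd (m+1) s*e (m+1) s = ((n:ℝ)*dd (m+1) s)*e (m+1) s := by ring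
                _ ≤ ((n:ℝ)*dd (m+1) s)*S :=
                    mul_le_mul_of_nonneg_left heS (mul_nonneg hn0.le hdd0')
                _ = (n:ℝ)*S*dd (m+1) s := by ring
            have t2 : (e (m+1) s/(n:ℝ))*e (m+1) s ≤ (S/(n:ℝ))*e (m+1) s := by
              apply mul_le_mul_of_nonneg_right _ hee0
              gcongr
            linarith
    -- integrate the pointwise bound
    have hbc : ContinuousOn
        (fun s => (2/(dl (m+2))^2) * ((n:ℝ)*S*dd (m+1) s + (S/(n:ℝ))*e (m+1) s))
        (Set.Icc 0 T) :=
      continuousOn_const.mul ((continuousOn_const.mul (hddcont (m+1))).add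
        (continuousOn_const.mul (hecont (m+1))))
    have hint1 : J (m+2) ≤ (2/(dl (m+2))^2)
        * ((n:ℝ)*S*(∫ s in (0:ℝ)..T, dd (m+1) s) + (S/(n:ℝ))*(J (m+1))) := by
      have h1 : J (m+2) ≤ ∫ s in (0:ℝ)..T,
          (2/(dl (m+2))^2) * ((n:ℝ)*S*dd (m+1) s + (S/(n:ℝ))*e (m+1) s) := by
        simp only [hJ_def]
        apply intervalIntegral.integral_mono_on hT.le
          (cont_ii (hecont (m+2)) ⟨hT.le, le_rfl⟩) (cont_ii hbc ⟨hT.le, le_rfl⟩)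
        exact hpt
      have h2 : (∫ s in (0:ℝ)..T,
          (2/(dl (m+2))^2) * ((n:ℝ)*S*dd (m+1) s + (S/(n:ℝ))*e (m+1) s))
          = (2/(dl (m+2))^2) * ((n:ℝ)*S*(∫ s in (0:ℝ)..T, dd (m+1) s)
            + (S/(n:ℝ))*(J (m+1))) := by
        simp only [hJ_def]
        rw [intervalIntegral.integral_const_mul, intervalIntegral.integral_add
          ((cont_ii (hddcont (m+1)) ⟨hT.le, le_rfl⟩).const_mul _)
          ((cont_ii (hecont (m+1)) ⟨hT.le, le_rfl⟩).const_mul _),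
          intervalIntegral.integral_const_mul, intervalIntegral.integral_const_mul]
      rw [← h2]
      exact h1
    -- numeric reduction
    have hDb := hdint m
    have hJ1b := hJmono m
    have hJm1b := hJmono m
    have hJm0 := hJ0' m
    have hJm10 := hJ0' (m+1)
    have hDpos : 0 ≤ (∫ s in (0:ℝ)..T, dd (m+1) s) :=
      intervalIntegral.integral_nonneg hT.le fun s _ => hdd0 (m+1) s
    -- substitute the power identities
    rw [hd1] at hDb
    rw [hd2] at hint1
    have hSval : S = 8*γ^2*A*(J m)/(Ch1*K^2) := by
      rw [hS_def, hd1, div_mul_eq_mul_div,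
        div_eq_div_iff (by positivity : (0:ℝ) < Ch1*(K^2/(4*A))).ne'
          (by positivity : (0:ℝ) < Ch1*K^2).ne']
      field_simp
      ring
    have hDb' : (∫ s in (0:ℝ)..T, dd (m+1) s) ≤ 8*γ^2*A*(J m)/((n:ℝ)^2*K^2) := by
      calc (∫ s in (0:ℝ)..T, dd (m+1) s) ≤ 2*γ^2/((n:ℝ)^2*(K^2/(4*A))) * J m := hDb
        _ = 8*γ^2*A*(J m)/((n:ℝ)^2*K^2) := by
            rw [div_mul_eq_mul_div,
              div_eq_div_iff (by positivity : (0:ℝ) < (n:ℝ)^2*(K^2/(4*A))).ne'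
                (by positivity : (0:ℝ) < (n:ℝ)^2*K^2).ne']
            field_simp
            ring
    have hK2 : (1:ℝ) ≤ K^2 := one_le_pow₀ hK1
    -- chain of inequalities
    have step1 : J (m+2) ≤ (32*A/K^2) * ((n:ℝ)*S*(∫ s in (0:ℝ)..T, dd (m+1) s)
        + (S/(n:ℝ))*(J (m+1))) := by
      have he1 : (2/(K^2/(16*A))) = 32*A/K^2 := by
        field_simp
        ring
      rw [he1] at hint1
      exact hint1
    have step2 : (n:ℝ)*S*(∫ s in (0:ℝ)..T, dd (m+1) s)
        ≤ (n:ℝ)*S*(8*γ^2*A*(J m)/((n:ℝ)^2*K^2)) :=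
      mul_le_mul_of_nonneg_left hDb' (mul_nonneg hn0.le hS0)
    have step3 : (S/(n:ℝ))*(J (m+1)) ≤ (S/(n:ℝ))*(J m) :=
      mul_le_mul_of_nonneg_left hJ1b (div_nonneg hS0 hn0.le)
    have step4 : J (m+2) ≤ (32*A/K^2) * ((n:ℝ)*S*(8*γ^2*A*(J m)/((n:ℝ)^2*K^2))
        + (S/(n:ℝ))*(J m)) := by
      apply le_trans step1
      apply mul_le_mul_of_nonneg_left _ (by positivity)
      linarith
    have step5 : (32*A/K^2) * ((n:ℝ)*S*(8*γ^2*A*(J m)/((n:ℝ)^2*K^2))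
        + (S/(n:ℝ))*(J m)) = (32*A*S*(J m)/((n:ℝ)*K^2)) * (8*γ^2*A/K^2 + 1) := by
      field_simp
    have step6 : 8*γ^2*A/K^2 + 1 ≤ (2*γ^2+1)*(4*A) := by
      have e1 : 8*γ^2*A/K^2 ≤ 8*γ^2*A := by
        rw [div_le_iff₀ (by positivity : (0:ℝ) < K^2)]
        nlinarith [mul_nonneg (mul_nonneg (by positivity : (0:ℝ) ≤ 8*γ^2) hA0.le) (sub_nonneg.mpr hK2)]
      nlinarith
    have step7 : J (m+2) ≤ (32*A*S*(J m)/((n:ℝ)*K^2)) * ((2*γ^2+1)*(4*A)) := by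
      rw [step5] at step4
      apply le_trans step4
      apply mul_le_mul_of_nonneg_left step6
      apply div_nonneg _ (by positivity)
      exact mul_nonneg (mul_nonneg (mul_nonneg (by norm_num) hA0.le) hS0) (hJ0' m)
    have step8 : (32*A*S*(J m)/((n:ℝ)*K^2)) * ((2*γ^2+1)*(4*A))
        = C0 * 64^m * (J m)^2 / (n:ℝ) := by
      rw [hSval, hC0_def, h64]
      field_simp
      ring
    rw [step8] at step7
    exact step7
  -- smallness condition of the De Giorgi iteration
  have hcond : C0 * (J 0) / (n:ℝ) ≤ 1/8192 := by
    have h1 : J 0 / (n:ℝ) ≤ T*R2 := by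
      rw [div_le_iff₀ hn0]
      calc J 0 ≤ T*((n:ℝ)*R2) := hJ0b
        _ = T*R2*(n:ℝ) := by ring
    have h2 : C0 * (J 0 / (n:ℝ)) ≤ C0 * (T*R2) := mul_le_mul_of_nonneg_left h1 hC00
    have h3 : C0 * (T*R2) ≤ 1/8192 := by
      rw [hC0_def]
      have hK4 : (0:ℝ) < K^4 := by positivity
      rw [div_mul_eq_mul_div, div_le_div_iff₀ (by positivity) (by norm_num : (0:ℝ) < 8192)]
      have h5 : 8388608*γ^2*(2*γ^2+1)*T*R2 ≤ Ch1*(K^4) := by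
        rw [div_le_iff₀ hCh1] at hKW
        linarith [hKW]
      nlinarith [h5]
    calc C0 * (J 0)/(n:ℝ) = C0 * (J 0/(n:ℝ)) := by ring
      _ ≤ C0*(T*R2) := h2
      _ ≤ 1/8192 := h3
  -- the iteration
  have hJ00 := hJ0' 0
  have hiter : ∀ p : ℕ, J (2*p) ≤ (1/8192:ℝ)^p * J 0 := by
    intro p
    induction p with
    | zero => simp
    | succ q ih =>
      have hidx : 2*(q+1) = (2*q) + 2 := by omega
      rw [hidx]
      have h2 := hrec (2*q)
      have hJq0 := hJ0' (2*q)
      have h64q : (64:ℝ)^(2*q) = 4096^q := by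
        rw [pow_mul]; norm_num
      have c2 : (J (2*q))^2 ≤ ((1/8192:ℝ)^q * J 0)^2 := pow_le_pow_left₀ hJq0 ih 2
      have hcc : (0:ℝ) ≤ C0*(4096:ℝ)^q := mul_nonneg hC00 (by positivity)
      have c3 : J (2*q+2) ≤ C0 * 4096^q * ((1/8192:ℝ)^q * J 0)^2 / (n:ℝ) := by
        rw [← h64q]
        apply le_trans h2
        rw [div_le_div_iff₀ hn0 hn0]
        have hcc' : (0:ℝ) ≤ C0*(64:ℝ)^(2*q) := by rw [h64q]; exact hcc
        have hmm := mul_le_mul_of_nonneg_left c2 hcc'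
        nlinarith [hmm]
      have hpowid : (4096:ℝ)^q * ((1/8192:ℝ)^q)^2 = (1/2:ℝ)^q * (1/8192:ℝ)^q := by
        calc (4096:ℝ)^q * ((1/8192:ℝ)^q)^2
            = (4096:ℝ)^q * ((1/8192:ℝ)^q * (1/8192:ℝ)^q) := by ring
          _ = ((4096:ℝ) * ((1/8192:ℝ) * (1/8192:ℝ)))^q := by
              rw [← mul_pow, ← mul_pow]
          _ = ((1/2:ℝ) * (1/8192:ℝ))^q := by norm_num
          _ = (1/2:ℝ)^q * (1/8192:ℝ)^q := mul_pow _ _ _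
      have c4 : C0 * 4096^q * ((1/8192:ℝ)^q * J 0)^2 / (n:ℝ)
          = (C0 * J 0/(n:ℝ)) * ((1/2:ℝ)^q * ((1/8192:ℝ)^q * J 0)) := by
        calc C0 * 4096^q * ((1/8192:ℝ)^q * J 0)^2 / (n:ℝ)
            = C0 * ((4096:ℝ)^q * ((1/8192:ℝ)^q)^2) * (J 0)^2 / (n:ℝ) := by ring
          _ = C0 * ((1/2:ℝ)^q * (1/8192:ℝ)^q) * (J 0)^2 / (n:ℝ) := by rw [hpowid]
          _ = (C0 * J 0/(n:ℝ)) * ((1/2:ℝ)^q * ((1/8192:ℝ)^q * J 0)) := by ring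
      have hfac0 : (0:ℝ) ≤ (1/2:ℝ)^q * ((1/8192:ℝ)^q * J 0) := by
        apply mul_nonneg (by positivity)
        exact mul_nonneg (by positivity) hJ00
      have c5 : (C0 * J 0/(n:ℝ)) * ((1/2:ℝ)^q * ((1/8192:ℝ)^q * J 0))
          ≤ (1/8192) * ((1/2:ℝ)^q * ((1/8192:ℝ)^q * J 0)) :=
        mul_le_mul_of_nonneg_right hcond hfac0
      have c6 : (1/8192) * ((1/2:ℝ)^q * ((1/8192:ℝ)^q * J 0))
          ≤ (1/8192:ℝ)^(q+1) * J 0 := by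
        have hhalf1 : (1/2:ℝ)^q ≤ 1 := pow_le_one₀ (by norm_num) (by norm_num)
        have hrr : (0:ℝ) ≤ (1/8192:ℝ)^q * J 0 := mul_nonneg (by positivity) hJ00
        calc (1/8192) * ((1/2:ℝ)^q * ((1/8192:ℝ)^q * J 0))
            ≤ (1/8192) * (1 * ((1/8192:ℝ)^q * J 0)) := by
              apply mul_le_mul_of_nonneg_left _ (by norm_num)
              exact mul_le_mul_of_nonneg_right hhalf1 hrr
          _ = (1/8192:ℝ)^(q+1) * J 0 := by rw [pow_succ]; ring
      calc J (2*q+2) ≤ C0 * 4096^q * ((1/8192:ℝ)^q * J 0)^2 / (n:ℝ) := c3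
        _ = (C0 * J 0/(n:ℝ)) * ((1/2:ℝ)^q * ((1/8192:ℝ)^q * J 0)) := c4
        _ ≤ (1/8192) * ((1/2:ℝ)^q * ((1/8192:ℝ)^q * J 0)) := c5
        _ ≤ (1/8192:ℝ)^(q+1) * J 0 := c6
  -- conclusion
  intro t ht i hi
  by_contra hcon
  push_neg at hcon
  set q : ℝ → ℝ := fun s => (max (v i s - 2*K) 0)^2 with hq_def
  have hqcont : ContinuousOn q (Set.Icc 0 T) :=
    (((hvc i hi).sub continuousOn_const).sup continuousOn_const).pow 2
  have hqle : ∀ m, ∀ s ∈ Set.Icc (0:ℝ) T, q s ≤ e m s := by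
    intro m s _
    have h1 : q s ≤ (w m i s)^2 := by
      simp only [hq_def, hw_def]
      exact pow_le_pow_left₀ (le_max_right _ _) (level_mono (hlev_le2K m) _) 2
    have h2 : (w m i s)^2 ≤ e m s := by
      simp only [he_def]
      exact Finset.single_le_sum (fun j _ => sq_nonneg (w m j s)) hi
    exact h1.trans h2
  have hqint : ∀ p : ℕ, (∫ s in (0:ℝ)..T, q s) ≤ (1/8192:ℝ)^p * J 0 := by
    intro p
    calc (∫ s in (0:ℝ)..T, q s) ≤ ∫ s in (0:ℝ)..T, e (2*p) s := by
          apply intervalIntegral.integral_mono_on hT.le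
            (cont_ii hqcont ⟨hT.le, le_rfl⟩) (cont_ii (hecont (2*p)) ⟨hT.le, le_rfl⟩)
          exact fun s hs => hqle (2*p) s hs
      _ = J (2*p) := rfl
      _ ≤ (1/8192:ℝ)^p * J 0 := hiter p
  have htend : Filter.Tendsto (fun p : ℕ => (1/8192:ℝ)^p * J 0) Filter.atTop (nhds 0) := by
    have := (tendsto_pow_atTop_nhds_zero_of_lt_one (by norm_num : (0:ℝ) ≤ 1/8192)
      (by norm_num : (1/8192:ℝ) < 1)).mul_const (J 0)
    simpa using this
  have hqz : (∫ s in (0:ℝ)..T, q s) ≤ 0 :=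
    ge_of_tendsto htend (Filter.Eventually.of_forall hqint)
  have hqpos : 0 < (∫ s in (0:ℝ)..T, q s) := by
    apply intervalIntegral.integral_pos hT hqcont
    · intro s _
      simp only [hq_def]
      positivity
    · refine ⟨t, ht, ?_⟩
      simp only [hq_def]
      have h1 : max (v i t - 2*K) 0 = v i t - 2*K := max_eq_left (by linarith)
      rw [h1]
      nlinarith [hcon]
  linarith
/-- Cell averages of a function bounded by `C` on `[0,1]` are bounded by `C`. -/
private lemma cellAvg_bound {n : ℕ} (hn : 3 ≤ n) {f : ℝ → ℝ} {C : ℝ}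
    {j : ℕ} (hj1 : 1 ≤ j) (hjn : j ≤ n)
    (hf : ∀ x ∈ Set.Icc (0:ℝ) 1, |f x| ≤ C) :
    |cellAvg n f j| ≤ C := by
  have hn0 : (0:ℝ) < n := by exact_mod_cast Nat.lt_of_lt_of_le (by norm_num) hn
  have hj1R : (1:ℝ) ≤ (j:ℝ) := by exact_mod_cast hj1
  have hjnR : (j:ℝ) ≤ (n:ℝ) := by exact_mod_cast hjn
  have hab : ((j:ℝ)-1)/n ≤ (j:ℝ)/n := (div_le_div_iff_of_pos_right hn0).mpr (by linarith)
  have ha0 : (0:ℝ) ≤ ((j:ℝ)-1)/n := div_nonneg (by linarith) hn0.le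
  have hb1 : (j:ℝ)/n ≤ 1 := by rw [div_le_one hn0]; exact hjnR
  have hbound : ‖∫ x in (((j:ℝ)-1)/n)..((j:ℝ)/n), f x‖ ≤ C * |(j:ℝ)/n - ((j:ℝ)-1)/n| := by
    apply intervalIntegral.norm_integral_le_of_norm_le_const
    intro x hx
    rw [Set.uIoc_of_le hab] at hx
    rw [Real.norm_eq_abs]
    exact hf x ⟨le_trans ha0 hx.1.le, hx.2.trans hb1⟩
  have hba : (j:ℝ)/n - ((j:ℝ)-1)/n = 1/n := by field_simp; ring
  rw [hba, abs_of_nonneg (by positivity : (0:ℝ) ≤ 1/(n:ℝ)), Real.norm_eq_abs] at hbound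
  simp only [cellAvg]
  rw [abs_mul, abs_of_nonneg hn0.le]
  calc (n:ℝ) * |∫ x in (((j:ℝ)-1)/n)..((j:ℝ)/n), f x| ≤ (n:ℝ) * (C * (1/n)) :=
        mul_le_mul_of_nonneg_left hbound hn0.le
    _ = C := by field_simp

/-- **Uniform L^∞ bound on the approximate solutions (Lemma 4.2).**
Under (A1), (A2), `p ∈ W^{1,2}(0,T;L²) ∩ L^∞(Q(T)) ∩ L²(0,T;H¹)` and `v₀ ∈ H¹(0,1)`,
there is `C₆ > 0` independent of `n ≥ 3` such that `|v^{(n)}| ≤ C₆` on `(0,T)×(0,1)`;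
in fact `|v_i(t)| ≤ ‖ṽ^{(n)}(t)‖_{L²(0,1)} + ‖v^{(n)}(t)‖_{L²(0,1)}` for every `t,i`. -/
theorem stmt_8
    (T : ℝ) (hT : 0 < T)
    (h h' h'' b b' b'' : ℝ → ℝ) (Ch1 Ch2 Cb1 Cb2 : ℝ)
    (hCh1 : 0 < Ch1) (hCh2 : 0 < Ch2) (hCb1 : 0 < Cb1) (hCb2 : 0 < Cb2)
    (hhderiv : ∀ x : ℝ, HasDerivAt h (h' x) x)
    (hh'deriv : ∀ x : ℝ, HasDerivAt h' (h'' x) x)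
    (hh''cont : Continuous h'')
    (hA1 : ∀ x : ℝ, Ch1 ≤ h' x ∧ h' x ≤ Ch2 ∧ |h'' x| ≤ Ch2)
    (hbderiv : ∀ x : ℝ, HasDerivAt b (b' x) x)
    (hb'deriv : ∀ x : ℝ, HasDerivAt b' (b'' x) x)
    (hb''cont : Continuous b'')
    (hA2 : ∀ x : ℝ, Cb1 ≤ b x ∧ b x ≤ Cb2 ∧ |b' x| ≤ Cb2 ∧ |b'' x| ≤ Cb2)
    (p pt px : ℝ → ℝ → ℝ) (M : ℝ)
    -- p ∈ W^{1,2}(0,T; L²(0,1)) with time derivative pt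
    (hpW : ∀ᵐ x ∂(volume.restrict (Set.Ioo (0:ℝ) 1)),
        IntervalIntegrable (fun t => pt t x) volume 0 T ∧
        ∀ t ∈ Set.Icc (0:ℝ) T, p t x = p 0 x + ∫ s in (0:ℝ)..t, pt s x)
    (hpL2 : ∀ t ∈ Set.Icc (0:ℝ) T,
        IntervalIntegrable (fun x => p t x) volume 0 1 ∧
        IntervalIntegrable (fun x => (p t x)^2) volume 0 1)
    (hptL2 : ∀ᵐ t ∂(volume.restrict (Set.Ioo (0:ℝ) T)),
        IntervalIntegrable (fun x => (pt t x)^2) volume 0 1)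
    (hptT : IntervalIntegrable (fun t => ∫ x in (0:ℝ)..1, (pt t x)^2) volume 0 T)
    -- p ∈ L^∞((0,T)×(0,1))
    (hpinf : ∀ t ∈ Set.Icc (0:ℝ) T, ∀ x ∈ Set.Icc (0:ℝ) 1, |p t x| ≤ M)
    -- p ∈ L²(0,T; H¹(0,1)) with spatial derivative px
    (hpH1 : ∀ᵐ t ∂(volume.restrict (Set.Ioo (0:ℝ) T)),
        IntervalIntegrable (fun x => px t x) volume 0 1 ∧
        IntervalIntegrable (fun x => (px t x)^2) volume 0 1 ∧
        ∀ x ∈ Set.Icc (0:ℝ) 1, p t x = p t 0 + ∫ y in (0:ℝ)..x, px t y)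
    (hpxT : IntervalIntegrable (fun t => ∫ x in (0:ℝ)..1, (px t x)^2) volume 0 T)
    -- v₀ ∈ H¹(0,1)
    (v₀ v₀' : ℝ → ℝ)
    (hv₀int : IntervalIntegrable v₀' volume 0 1)
    (hv₀AC : ∀ x ∈ Set.Icc (0:ℝ) 1, v₀ x = v₀ 0 + ∫ y in (0:ℝ)..x, v₀' y)
    (hv₀L2 : IntervalIntegrable (fun x => (v₀ x)^2) volume 0 1)
    (hv₀'L2 : IntervalIntegrable (fun x => (v₀' x)^2) volume 0 1) :
    ∃ C₆ : ℝ, 0 < C₆ ∧ ∀ n : ℕ, 3 ≤ n → ∀ v d : ℕ → ℝ → ℝ,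
      IsFVMSol T n h' b p v₀ v d →
      ∀ t ∈ Set.Icc (0:ℝ) T, ∀ i ∈ Finset.Icc 1 n,
        |v i t| ≤ C₆ ∧
        |v i t| ≤ Real.sqrt ((1 / (n:ℝ)) * ∑ k ∈ Finset.Icc 2 n,
                      ((v k t - v (k - 1) t) / (1 / (n:ℝ)))^2)
                  + Real.sqrt ((1 / (n:ℝ)) * ∑ j ∈ Finset.Icc 1 n, (v j t)^2) := by
  classical
  have hM0 : 0 ≤ M :=
    le_trans (abs_nonneg _) (hpinf 0 ⟨le_rfl, hT.le⟩ 0 ⟨le_rfl, by norm_num⟩)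
  set γ : ℝ := Cb2 * M with hγ_def
  have hγ0 : 0 ≤ γ := mul_nonneg hCb2.le hM0
  set K₀ : ℝ := |v₀ 0| + ∫ y in (0:ℝ)..1, |v₀' y| with hK₀_def
  have hK₀0 : 0 ≤ K₀ := add_nonneg (abs_nonneg _)
    (intervalIntegral.integral_nonneg (by norm_num) (fun y _ => abs_nonneg _))
  have hCh12 : Ch1 ≤ Ch2 := le_trans (hA1 0).1 (hA1 0).2.1
  have hh'c : Continuous h' := by
    rw [continuous_iff_continuousAt]
    exact fun x => (hh'deriv x).differentiableAt.continuousAt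
  have hh'b : ∀ x, Ch1 ≤ h' x ∧ h' x ≤ Ch2 := fun x => ⟨(hA1 x).1, (hA1 x).2.1⟩
  have hv₀bd : ∀ x ∈ Set.Icc (0:ℝ) 1, |v₀ x| ≤ K₀ := by
    intro x hx
    rw [hv₀AC x hx]
    have h1 : |∫ y in (0:ℝ)..x, v₀' y| ≤ ∫ y in (0:ℝ)..x, |v₀' y| :=
      intervalIntegral.abs_integral_le_integral_abs hx.1
    have h2 : (∫ y in (0:ℝ)..x, |v₀' y|) ≤ ∫ y in (0:ℝ)..1, |v₀' y| := by
      apply intervalIntegral.integral_mono_interval le_rfl hx.1 hx.2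
      · exact MeasureTheory.ae_of_all _ (fun y => abs_nonneg _)
      · exact hv₀int.abs
    calc |v₀ 0 + ∫ y in (0:ℝ)..x, v₀' y| ≤ |v₀ 0| + |∫ y in (0:ℝ)..x, v₀' y| := abs_add_le _ _
      _ ≤ K₀ := by rw [hK₀_def]; linarith
  refine ⟨2 * osK Ch1 Ch2 γ K₀ T, by
    have := le_max_left (1:ℝ) (max K₀ (8388608 * γ^2 * (2*γ^2+1) * T *
      ((Ch2^2*K₀^2 + T*(γ^2*Ch2^2/(2*Ch1)))/Ch1^2) / Ch1))
    simp only [osK]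
    linarith, ?_⟩
  intro n hn v d hsol t ht i hi
  obtain ⟨hdcont, hmain, hinit⟩ := hsol
  have hv0b : ∀ j ∈ Finset.Icc 1 n, |v j 0| ≤ K₀ := by
    intro j hj
    rw [hinit j hj]
    simp only [Finset.mem_Icc] at hj
    exact cellAvg_bound hn hj.1 hj.2 hv₀bd
  have hF0 : ∀ s ∈ Set.Icc (0:ℝ) T, fvmFlux n b p v 0 s = 0 := by
    intro s _
    simp only [fvmFlux]
    rw [if_neg (by omega)]
  have hFn : ∀ s ∈ Set.Icc (0:ℝ) T, fvmFlux n b p v n s = 0 := by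
    intro s _
    simp only [fvmFlux]
    rw [if_neg (by omega)]
  have hFi : ∀ j ∈ Finset.Icc 1 (n-1), ∀ s ∈ Set.Icc (0:ℝ) T,
      fvmFlux n b p v j s = (n:ℝ)*(v (j+1) s - v j s)
        + b ((v j s + v (j+1) s)/2) * cellAvg n (fun x => p s x) j := by
    intro j hj s _
    simp only [Finset.mem_Icc] at hj
    simp only [fvmFlux]
    rw [if_pos ⟨hj.1, hj.2⟩]
  have hgb : ∀ j ∈ Finset.Icc 1 (n-1), ∀ s ∈ Set.Icc (0:ℝ) T,
      |b ((v j s + v (j+1) s)/2) * cellAvg n (fun x => p s x) j| ≤ γ := by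
    intro j hj s hs
    simp only [Finset.mem_Icc] at hj
    rw [abs_mul]
    have hb1 : |b ((v j s + v (j+1) s)/2)| ≤ Cb2 := by
      rw [abs_of_nonneg (le_trans hCb1.le (hA2 _).1)]
      exact (hA2 _).2.1
    have hc1 : |cellAvg n (fun x => p s x) j| ≤ M :=
      cellAvg_bound hn hj.1 (by omega) (fun x hx => hpinf s hs x hx)
    calc |b ((v j s + v (j+1) s)/2)| * |cellAvg n (fun x => p s x) j|
        ≤ Cb2 * M := mul_le_mul hb1 hc1 (abs_nonneg _) hCb2.le
      _ = γ := hγ_def.symm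
  have hupper := onesided n hn T hT h h' Ch1 Ch2 hCh1 hCh12 hhderiv hh'c hh'b
    v d (fun j s => fvmFlux n b p v j s)
    (fun j s => b ((v j s + v (j+1) s)/2) * cellAvg n (fun x => p s x) j)
    γ K₀ hγ0 hK₀0 hdcont
    (fun i hi t ht => (hmain i hi t ht).1)
    (fun i hi t ht => (hmain i hi t ht).2)
    hF0 hFn hFi hgb hv0b
  have hlower := onesided n hn T hT (fun s => -h (-s)) (fun s => h' (-s)) Ch1 Ch2 hCh1 hCh12
    (fun x => by
      have h1 : HasDerivAt (fun s : ℝ => h (-s)) (h' (-x) * (-1)) x :=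
        (hhderiv (-x)).comp x (hasDerivAt_neg' x)
      simpa using h1.fun_neg)
    (hh'c.comp continuous_neg) (fun x => hh'b (-x))
    (fun j s => -(v j s)) (fun j s => -(d j s))
    (fun j s => -(fvmFlux n b p v j s))
    (fun j s => -(b ((v j s + v (j+1) s)/2) * cellAvg n (fun x => p s x) j))
    γ K₀ hγ0 hK₀0
    (fun i hi => (hdcont i hi).neg)
    (fun i hi t ht => ((hmain i hi t ht).1).neg)
    (fun i hi t ht => by
      simp only [neg_neg]
      rw [show h' (v i t) * -(d i t) = -(h' (v i t) * d i t) by ring,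
        (hmain i hi t ht).2]
      ring)
    (fun s hs => by simp [hF0 s hs])
    (fun s hs => by simp [hFn s hs])
    (fun j hj s hs => by
      rw [hFi j hj s hs]
      ring)
    (fun j hj s hs => by
      simp only [abs_neg]
      exact hgb j hj s hs)
    (fun j hj => by
      simp only [abs_neg]
      exact hv0b j hj)
  constructor
  · have h1 := hupper t ht i hi
    have h2 := hlower t ht i hi
    rw [abs_le]
    exact ⟨by linarith, h1⟩
  · exact discrete_sobolev n hn (fun j => v j t) hi
end

section
/- Discrete embedding inequality (key step in the proof of Lemma 4.2). Let n ≥ 2 be an integer and Δx = 1/n. Then for all real numbers v₁, …, v_n and every index i ∈ {1, …, n}: |v_i| ≤ ( Δx Σ_{k=2}^n ((v_k − v_{k-1})/Δx)² )^{1/2} + ( Δx Σ_{j=1}^n v_j² )^{1/2}. -/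
lemma tele_aux (v : ℕ → ℝ) (j : ℕ) : ∀ i, j ≤ i →
    |v i - v j| ≤ ∑ k ∈ Finset.Icc (j+1) i, |v k - v (k-1)| := by
  intro i h
  induction i, h using Nat.le_induction with
  | base => simp
  | succ i hji ih =>
    rw [Finset.sum_Icc_succ_top (by omega)]
    have h1 : v (i+1) - v j = (v i - v j) + (v (i+1) - v i) := by ring
    calc |v (i+1) - v j| ≤ |v i - v j| + |v (i+1) - v i| := by
          rw [h1]; exact abs_add_le _ _
      _ ≤ (∑ k ∈ Finset.Icc (j+1) i, |v k - v (k-1)|) + |v (i+1) - v (i+1-1)| := by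
          simp only [Nat.add_sub_cancel]; exact add_le_add_left ih _
      _ = _ := rfl

/-- **Discrete embedding inequality (key step in the proof of Lemma 4.2).**
For an integer `n ≥ 2`, `Δx = 1/n`, any grid function `v₁, …, v_n` and any
index `i ∈ {1,…,n}`,
`|v i| ≤ (Δx ∑_{k=2}^n ((v k − v (k−1))/Δx)²)^{1/2} + (Δx ∑_{j=1}^n (v j)²)^{1/2}`. -/
theorem stmt_9 (n : ℕ) (hn : 2 ≤ n) (v : ℕ → ℝ) (i : ℕ) (hi : i ∈ Finset.Icc 1 n) :
    |v i| ≤ Real.sqrt ((1 / (n:ℝ)) * ∑ k ∈ Finset.Icc 2 n,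
              ((v k - v (k - 1)) / (1 / (n:ℝ)))^2)
          + Real.sqrt ((1 / (n:ℝ)) * ∑ j ∈ Finset.Icc 1 n, (v j)^2) := by
  rw [Finset.mem_Icc] at hi
  have hnpos : (0:ℝ) < n := by positivity
  set D : ℝ := ∑ k ∈ Finset.Icc 2 n, |v k - v (k-1)| with hD
  set Sd : ℝ := ∑ k ∈ Finset.Icc 2 n, (v k - v (k-1))^2 with hSd
  set S2 : ℝ := ∑ j ∈ Finset.Icc 1 n, (v j)^2 with hS2
  have hSdnn : 0 ≤ Sd := Finset.sum_nonneg fun _ _ => sq_nonneg _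
  -- step 1: |v i| ≤ |v j| + D for j ∈ Icc 1 n
  have step1 : ∀ j ∈ Finset.Icc 1 n, |v i| ≤ |v j| + D := by
    intro j hj
    rw [Finset.mem_Icc] at hj
    have key : |v i - v j| ≤ D := by
      rcases le_total j i with h | h
      · refine (tele_aux v j i h).trans ?_
        exact Finset.sum_le_sum_of_subset_of_nonneg
          (Finset.Icc_subset_Icc (by omega) (by omega))
          (fun _ _ _ => abs_nonneg _)
      · rw [abs_sub_comm]
        refine (tele_aux v i j h).trans ?_
        exact Finset.sum_le_sum_of_subset_of_nonneg
          (Finset.Icc_subset_Icc (by omega) (by omega))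
          (fun _ _ _ => abs_nonneg _)
    calc |v i| = |v j + (v i - v j)| := by ring_nf
      _ ≤ |v j| + |v i - v j| := abs_add_le _ _
      _ ≤ |v j| + D := by linarith
  -- step 2: average over j
  have step2 : |v i| ≤ (1/(n:ℝ)) * (∑ j ∈ Finset.Icc 1 n, |v j|) + D := by
    have hsum : (n:ℝ) * |v i| ≤ (∑ j ∈ Finset.Icc 1 n, |v j|) + (n:ℝ) * D := by
      have := Finset.sum_le_sum step1
      have hcard : (Finset.Icc 1 n).card = n := by rw [Nat.card_Icc]; omega
      rw [Finset.sum_add_distrib, Finset.sum_const, Finset.sum_const, hcard] at this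
      simpa [nsmul_eq_mul] using this
    rw [show (1/(n:ℝ)) * (∑ j ∈ Finset.Icc 1 n, |v j|) + D
        = ((∑ j ∈ Finset.Icc 1 n, |v j|) + (n:ℝ) * D) / n from by field_simp,
      le_div_iff₀ hnpos]
    nlinarith
  -- Cauchy-Schwarz for the zeroth-order term
  have cA : (1/(n:ℝ)) * (∑ j ∈ Finset.Icc 1 n, |v j|) ≤ Real.sqrt ((1/(n:ℝ)) * S2) := by
    rw [Real.le_sqrt (mul_nonneg (by positivity)
      (Finset.sum_nonneg fun _ _ => abs_nonneg _))
      (mul_nonneg (by positivity) (Finset.sum_nonneg fun _ _ => sq_nonneg _))]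
    have hcs := sq_sum_le_card_mul_sum_sq (s := Finset.Icc 1 n) (f := fun j => |v j|)
    have hcard : (Finset.Icc 1 n).card = n := by rw [Nat.card_Icc]; omega
    rw [hcard] at hcs
    have hsq : (∑ j ∈ Finset.Icc 1 n, |v j| ^ 2) = S2 := by
      simp [hS2, sq_abs]
    rw [hsq] at hcs
    rw [mul_pow]
    calc (1/(n:ℝ))^2 * (∑ j ∈ Finset.Icc 1 n, |v j|)^2
        ≤ (1/(n:ℝ))^2 * ((n:ℝ) * S2) := by
          apply mul_le_mul_of_nonneg_left _ (by positivity)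
          exact_mod_cast hcs
      _ = (1/(n:ℝ)) * S2 := by field_simp
  -- Cauchy-Schwarz for the difference term
  have cD : D ≤ Real.sqrt ((1 / (n:ℝ)) * ∑ k ∈ Finset.Icc 2 n,
      ((v k - v (k - 1)) / (1 / (n:ℝ)))^2) := by
    have harg : (1 / (n:ℝ)) * ∑ k ∈ Finset.Icc 2 n,
        ((v k - v (k - 1)) / (1 / (n:ℝ)))^2 = (n:ℝ) * Sd := by
      rw [hSd, Finset.mul_sum, Finset.mul_sum]
      apply Finset.sum_congr rfl
      intro k _
      field_simp
    rw [harg, Real.le_sqrt (Finset.sum_nonneg fun _ _ => abs_nonneg _)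
      (mul_nonneg hnpos.le hSdnn)]
    have hcs := sq_sum_le_card_mul_sum_sq (s := Finset.Icc 2 n)
      (f := fun k => |v k - v (k-1)|)
    have hcard : (Finset.Icc 2 n).card = n - 1 := by rw [Nat.card_Icc]; omega
    rw [hcard] at hcs
    have hsq : (∑ k ∈ Finset.Icc 2 n, |v k - v (k-1)| ^ 2) = Sd := by
      simp [hSd, sq_abs]
    rw [hsq] at hcs
    calc D^2 ≤ ((n:ℝ) - 1) * Sd := by
          have : ((n - 1 : ℕ) : ℝ) = (n:ℝ) - 1 := by
            have : (1:ℕ) ≤ n := by omega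
            push_cast [this]; ring
          rw [← this]; exact_mod_cast hcs
      _ ≤ (n:ℝ) * Sd := by nlinarith
  linarith
end

section
/- Pointwise comparison inequality for the difference between a piecewise constant function and an H¹ function (inequality (esti4) in the proof of Lemma 4.1). Let n ≥ 2 be an integer, Δx = 1/n, x_i = iΔx, V_i = [x_{i−1}, x_i) for i = 1,…,n−1 and V_n = [x_{n−1}, x_n]. Let w be absolutely continuous on [0,1] with ∂_x w ∈ L²(0,1), and let s = Σ_{i=1}^n z_i 1_{V_i} with z_i ∈ ℝ. Set I₂ = ( ∫_{Δx}^1 |δ_x s(ξ) − ∂_x w(ξ)|² dξ )^{1/2} + ( ∫_{Δx}^1 |∂_x w(ξ) − ∂_x w(ξ − Δx)|² dξ )^{1/2} + 2 (Δx)^{1/2} ‖∂_x w‖_{L²(0,1)}, where δ_x s(x) = (s(x) − s(x−Δx))/Δx. Then for all x, y ∈ [Δx, 1]: |s(x) − w(x)|² ≤ |s(y) − w(y)|² + I₂ ( |s(x) − w(x)| + |s(y) − w(y)| ). -/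
open MeasureTheory

lemma my_ae_eq_Ioo {a b : ℝ} (hab : a ≤ b) {f g : ℝ → ℝ}
    (h : ∀ ξ ∈ Set.Ioo a b, f ξ = g ξ) :
    f =ᵐ[volume.restrict (Set.uIoc a b)] g := by
  rw [Set.uIoc_of_le hab]
  rw [Filter.EventuallyEq, MeasureTheory.ae_iff]
  rw [Measure.restrict_apply' measurableSet_Ioc]
  refine measure_mono_null (fun x hx => ?_) (Real.volume_singleton (a := b))
  simp only [Set.mem_inter_iff, Set.mem_setOf_eq, Set.mem_Ioc] at hx
  simp only [Set.mem_singleton_iff]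
  by_contra hxb
  exact hx.1 (h x ⟨hx.2.1, lt_of_le_of_ne hx.2.2 hxb⟩)

lemma my_cs {a b : ℝ} (hab : a ≤ b) {g : ℝ → ℝ} (hg : IntervalIntegrable g volume a b)
    (hg2 : IntervalIntegrable (fun x => (g x)^2) volume a b) :
    |∫ x in a..b, g x| ≤ Real.sqrt (b - a) * Real.sqrt (∫ x in a..b, (g x)^2) := by
  set A := ∫ x in a..b, g x with hA
  set B := ∫ x in a..b, (g x)^2 with hB
  set L := b - a with hL
  have hL0 : 0 ≤ L := by simp [hL]; linarith
  have key : A^2 ≤ L * B := by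
    rcases eq_or_lt_of_le hL0 with h0 | hpos
    · have : a = b := by simp [hL] at h0; linarith
      subst this
      simp [hA, hB]
    · set t := A / L with ht
      have hexp : ∫ x in a..b, (g x - t)^2
          = B - (2 * t * A - t^2 * L) := by
        have h1 : ∀ x, (g x - t)^2 = (g x)^2 - (2 * t * g x - t^2) := by intro x; ring
        simp only [h1]
        rw [intervalIntegral.integral_sub hg2 (((hg.const_mul (2*t))).sub
          (intervalIntegrable_const))]
        rw [intervalIntegral.integral_sub (hg.const_mul (2*t)) intervalIntegrable_const]
        rw [intervalIntegral.integral_const_mul, intervalIntegral.integral_const]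
        ring_nf
        rw [hA, hB, hL]
        ring
      have hnn : 0 ≤ ∫ x in a..b, (g x - t)^2 :=
        intervalIntegral.integral_nonneg hab (fun u _ => sq_nonneg _)
      rw [hexp] at hnn
      have : 2 * t * A - t^2 * L = A^2 / L := by
        field_simp [ht]
        rw [ht]; field_simp [hpos.ne']; ring
      rw [this, sub_nonneg, div_le_iff₀ hpos] at hnn
      linarith [hnn]
  calc |A| = Real.sqrt (A^2) := (Real.sqrt_sq_eq_abs A).symm
    _ ≤ Real.sqrt (L * B) := Real.sqrt_le_sqrt key
    _ = Real.sqrt L * Real.sqrt B := Real.sqrt_mul hL0 B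

set_option maxHeartbeats 1000000 in
/-- **Pointwise comparison inequality for the difference between a piecewise constant
function and an H¹ function (inequality (esti4) in the proof of Lemma 4.1).**
Let `n ≥ 2`, `Δx = 1/n`, let `w` be absolutely continuous on `[0,1]` with
`∂ₓw = w' ∈ L²(0,1)` and let `s = ∑_{i=1}^n z_i 1_{V_i}` be piecewise constant on the
cells `V_i = [(i−1)Δx, iΔx)` (`V_n = [(n−1)Δx, 1]`).  With
`I₂ = ‖δₓs − w'‖_{L²(Δx,1)} + ‖w' − w'(·−Δx)‖_{L²(Δx,1)} + 2 √Δx ‖w'‖_{L²(0,1)}`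
one has, for all `x, y ∈ [Δx,1]`,
`|s x − w x|² ≤ |s y − w y|² + I₂ (|s x − w x| + |s y − w y|)`. -/
theorem stmt_16 (n : ℕ) (hn : 2 ≤ n) (Δx : ℝ) (hΔx : Δx = 1 / (n:ℝ))
    (w w' : ℝ → ℝ)
    (hwint : IntervalIntegrable w' volume 0 1)
    (hwAC : ∀ x ∈ Set.Icc (0:ℝ) 1, w x = w 0 + ∫ y in (0:ℝ)..x, w' y)
    (hw'L2 : IntervalIntegrable (fun x => (w' x)^2) volume 0 1)
    (z : ℕ → ℝ) (s : ℝ → ℝ)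
    (hs : ∀ i ∈ Finset.Icc 1 n, ∀ x ∈
        (if i = n then Set.Icc (((i:ℝ) - 1) * Δx) ((i:ℝ) * Δx)
         else Set.Ico (((i:ℝ) - 1) * Δx) ((i:ℝ) * Δx)), s x = z i) :
    ∀ x ∈ Set.Icc Δx 1, ∀ y ∈ Set.Icc Δx 1,
      (s x - w x)^2 ≤ (s y - w y)^2 +
        (Real.sqrt (∫ ξ in Δx..1, ((s ξ - s (ξ - Δx)) / Δx - w' ξ)^2)
          + Real.sqrt (∫ ξ in Δx..1, (w' ξ - w' (ξ - Δx))^2)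
          + 2 * Real.sqrt Δx * Real.sqrt (∫ ξ in (0:ℝ)..1, (w' ξ)^2))
        * (|s x - w x| + |s y - w y|) := by
  have hnR : (2:ℝ) ≤ (n:ℝ) := by exact_mod_cast hn
  have hΔpos : 0 < Δx := by rw [hΔx]; positivity
  have hnΔ : (n:ℝ) * Δx = 1 := by
    rw [hΔx]; field_simp
  set δ : ℝ → ℝ := fun ξ => (s ξ - s (ξ - Δx)) / Δx with hδdef
  -- value of s on cells (Ico version)
  have hsIco : ∀ i : ℕ, 1 ≤ i → i ≤ n → ∀ ξ : ℝ,
      ((i:ℝ) - 1) * Δx ≤ ξ → ξ < (i:ℝ) * Δx → s ξ = z i := by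
    intro i h1 h2 ξ hl hr
    by_cases hin : i = n
    · exact hs i (Finset.mem_Icc.2 ⟨h1, h2⟩) ξ (by rw [if_pos hin]; exact ⟨hl, hr.le⟩)
    · exact hs i (Finset.mem_Icc.2 ⟨h1, h2⟩) ξ (by rw [if_neg hin]; exact ⟨hl, hr⟩)
  have hsIcc : ∀ ξ : ℝ, ((n:ℝ) - 1) * Δx ≤ ξ → ξ ≤ (n:ℝ) * Δx → s ξ = z n := by
    intro ξ hl hr
    exact hs n (Finset.mem_Icc.2 ⟨le_trans one_le_two hn, le_rfl⟩) ξ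
      (by rw [if_pos rfl]; exact ⟨hl, hr⟩)
  -- δ on open cells
  have hδcell : ∀ i : ℕ, 2 ≤ i → i ≤ n → ∀ ξ ∈ Set.Ioo (((i:ℝ) - 1) * Δx) ((i:ℝ) * Δx),
      δ ξ = (z i - z (i - 1)) / Δx := by
    intro i h2 hin ξ hξ
    obtain ⟨hl, hr⟩ := hξ
    have h1i : 1 ≤ i := le_trans one_le_two h2
    have hsξ : s ξ = z i := hsIco i h1i hin ξ hl.le hr
    have hsξ' : s (ξ - Δx) = z (i - 1) := by
      have h1 : 1 ≤ i - 1 := by omega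
      have h2' : i - 1 ≤ n := by omega
      have hcast : ((i - 1 : ℕ) : ℝ) = (i:ℝ) - 1 := by
        have : (1:ℕ) ≤ i := h1i
        push_cast [Nat.cast_sub h1i]
        ring
      apply hsIco (i-1) h1 h2' (ξ - Δx)
      · rw [hcast]; nlinarith
      · rw [hcast]; nlinarith
    simp only [hδdef, hsξ, hsξ']
  -- restricted integrability of w' and its square
  have hW : ∀ a b : ℝ, a ∈ Set.Icc (0:ℝ) 1 → b ∈ Set.Icc (0:ℝ) 1 →
      IntervalIntegrable w' volume a b := by
    intro a b ha hb
    refine hwint.mono_set (Set.uIcc_subset_uIcc ?_ ?_) <;>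
      simp [Set.uIcc_of_le (zero_le_one' ℝ)] <;> first | exact ha | exact hb
  have hW2 : ∀ a b : ℝ, a ∈ Set.Icc (0:ℝ) 1 → b ∈ Set.Icc (0:ℝ) 1 →
      IntervalIntegrable (fun x => (w' x)^2) volume a b := by
    intro a b ha hb
    refine hw'L2.mono_set (Set.uIcc_subset_uIcc ?_ ?_) <;>
      simp [Set.uIcc_of_le (zero_le_one' ℝ)] <;> first | exact ha | exact hb
  -- endpoints of cells lie in [0,1]
  have hmemIcc : ∀ i : ℕ, i ≤ n → ((i:ℝ) * Δx) ∈ Set.Icc (0:ℝ) 1 := by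
    intro i hi
    constructor
    · positivity
    · rw [← hnΔ]
      have : (i:ℝ) ≤ (n:ℝ) := by exact_mod_cast hi
      nlinarith
  -- per-cell facts
  have hcellInt : ∀ i : ℕ, 2 ≤ i → i ≤ n →
      IntervalIntegrable δ volume (((i:ℝ) - 1) * Δx) ((i:ℝ) * Δx) ∧
      IntervalIntegrable (fun ξ => (δ ξ - w' ξ)^2) volume (((i:ℝ) - 1) * Δx) ((i:ℝ) * Δx) ∧
      (∫ ξ in (((i:ℝ) - 1) * Δx)..((i:ℝ) * Δx), δ ξ) = z i - z (i - 1) := by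
    intro i h2 hin
    set a := ((i:ℝ) - 1) * Δx with hadef
    set b := (i:ℝ) * Δx with hbdef
    have hab : a ≤ b := by simp only [hadef, hbdef]; nlinarith
    set c := (z i - z (i - 1)) / Δx with hcdef
    have haeq : (fun _ : ℝ => c) =ᵐ[volume.restrict (Set.uIoc a b)] δ :=
      my_ae_eq_Ioo hab (fun ξ hξ => (hδcell i h2 hin ξ hξ).symm)
    have haIcc : a ∈ Set.Icc (0:ℝ) 1 := by
      have := hmemIcc (i-1) (by omega)
      have hcast : ((i - 1 : ℕ) : ℝ) = (i:ℝ) - 1 := by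
        push_cast [Nat.cast_sub (le_trans one_le_two h2)]; ring
      rwa [hcast] at this
    have hbIcc : b ∈ Set.Icc (0:ℝ) 1 := hmemIcc i hin
    have hδint : IntervalIntegrable δ volume a b :=
      (intervalIntegrable_const (c := c)).congr_ae haeq
    refine ⟨hδint, ?_, ?_⟩
    · have hconst : IntervalIntegrable (fun ξ => (c - w' ξ)^2) volume a b := by
        have hexp : ∀ ξ : ℝ, (c - w' ξ)^2 = c^2 - 2 * c * w' ξ + (w' ξ)^2 := by
          intro ξ; ring
        simp only [hexp]
        exact ((intervalIntegrable_const (c := c^2)).sub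
          ((hW a b haIcc hbIcc).const_mul (2*c))).add (hW2 a b haIcc hbIcc)
      refine hconst.congr_ae ?_
      have := my_ae_eq_Ioo hab (f := fun ξ => (c - w' ξ)^2)
        (g := fun ξ => (δ ξ - w' ξ)^2)
        (fun ξ hξ => by show (c - w' ξ)^2 = (δ ξ - w' ξ)^2; rw [hδcell i h2 hin ξ hξ])
      exact this
    · have : (∫ ξ in a..b, δ ξ) = ∫ _ in a..b, c := by
        refine intervalIntegral.integral_congr_ae ?_
        have := (ae_restrict_iff'
          (μ := (volume : Measure ℝ)) (measurableSet_uIoc (a := a) (b := b))).1 haeq.symm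
        exact this
      rw [this, intervalIntegral.integral_const, smul_eq_mul, hcdef]
      field_simp
      ring
  -- telescoping facts on [Δx, jΔx]
  have htel : ∀ j : ℕ, 1 ≤ j → j ≤ n →
      IntervalIntegrable δ volume Δx ((j:ℝ) * Δx) ∧
      IntervalIntegrable (fun ξ => (δ ξ - w' ξ)^2) volume Δx ((j:ℝ) * Δx) ∧
      (∫ ξ in Δx..((j:ℝ) * Δx), δ ξ) = z j - z 1 := by
    intro j hj
    induction j, hj using Nat.le_induction with
    | base =>
      intro _
      have h1 : ((1:ℕ):ℝ) * Δx = Δx := by norm_num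
      rw [h1]
      exact ⟨IntervalIntegrable.refl, IntervalIntegrable.refl, by simp⟩
    | succ j hj ih =>
      intro hjn
      obtain ⟨ih1, ih2, ih3⟩ := ih (by omega)
      obtain ⟨c1, c2, c3⟩ := hcellInt (j+1) (by omega) hjn
      simp only [Nat.cast_add, Nat.cast_one, add_sub_cancel_right, Nat.add_sub_cancel]
        at c1 c2 c3
      push_cast
      refine ⟨ih1.trans c1, ih2.trans c2, ?_⟩
      rw [← intervalIntegral.integral_add_adjacent_intervals ih1 c1, ih3, c3]
      ring
  have htot2 : IntervalIntegrable (fun ξ => (δ ξ - w' ξ)^2) volume Δx 1 := by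
    have := (htel n (by omega) le_rfl).2.1
    rwa [hnΔ] at this
  have hmono : ∀ a b : ℝ, Δx ≤ a → a ≤ b → b ≤ 1 →
      (∫ ξ in a..b, (δ ξ - w' ξ)^2) ≤ ∫ ξ in Δx..1, (δ ξ - w' ξ)^2 := by
    intro a b h1 h2 h3
    exact intervalIntegral.integral_mono_interval h1 h2 h3
      (Filter.Eventually.of_forall (fun ξ => sq_nonneg _)) htot2
  have hmonoW : ∀ a b : ℝ, 0 ≤ a → a ≤ b → b ≤ 1 →
      (∫ ξ in a..b, (w' ξ)^2) ≤ ∫ ξ in (0:ℝ)..1, (w' ξ)^2 := by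
    intro a b h1 h2 h3
    exact intervalIntegral.integral_mono_interval h1 h2 h3
      (Filter.Eventually.of_forall (fun ξ => sq_nonneg _)) hw'L2
  -- cell index
  have hidx : ∀ u ∈ Set.Icc Δx 1, ∃ j : ℕ, 2 ≤ j ∧ j ≤ n ∧
      ((j:ℝ) - 1) * Δx ≤ u ∧ u ≤ (j:ℝ) * Δx ∧ s u = z j ∧
      j = min n (⌊u / Δx⌋₊ + 1) := by
    intro u hu
    obtain ⟨hu1, hu2⟩ := hu
    have hu0 : 0 ≤ u / Δx := div_nonneg (le_trans hΔpos.le hu1) hΔpos.le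
    set m := ⌊u / Δx⌋₊ + 1 with hm
    have hfloorle : (⌊u / Δx⌋₊ : ℝ) ≤ u / Δx := Nat.floor_le hu0
    have hltfloor : u / Δx < (⌊u / Δx⌋₊ : ℝ) + 1 := Nat.lt_floor_add_one _
    have h2m : 2 ≤ m := by
      have : 1 ≤ ⌊u / Δx⌋₊ := Nat.le_floor (by
        rw [le_div_iff₀ hΔpos]; push_cast; linarith)
      omega
    rcases le_or_gt m n with hcase | hcase
    · refine ⟨m, h2m, hcase, ?_, ?_, ?_, (min_eq_right hcase).symm⟩
      · have : ((m:ℝ) - 1) = (⌊u / Δx⌋₊ : ℝ) := by push_cast [hm]; ring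
        rw [this]
        calc (⌊u / Δx⌋₊ : ℝ) * Δx ≤ (u / Δx) * Δx := by nlinarith
          _ = u := by field_simp
      · have hlt : u < (m:ℝ) * Δx := by
          have : u / Δx < (m:ℝ) := by push_cast [hm]; linarith
          calc u = (u / Δx) * Δx := by field_simp
            _ < (m:ℝ) * Δx := by nlinarith
        exact hlt.le
      · have hlt : u < (m:ℝ) * Δx := by
          have : u / Δx < (m:ℝ) := by push_cast [hm]; linarith
          calc u = (u / Δx) * Δx := by field_simp
            _ < (m:ℝ) * Δx := by nlinarith
        have hge : ((m:ℝ) - 1) * Δx ≤ u := by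
          have : ((m:ℝ) - 1) = (⌊u / Δx⌋₊ : ℝ) := by push_cast [hm]; ring
          rw [this]
          calc (⌊u / Δx⌋₊ : ℝ) * Δx ≤ (u / Δx) * Δx := by nlinarith
            _ = u := by field_simp
        exact hsIco m (by omega) hcase u hge hlt
    · -- here u = 1
      have hnm : (n:ℝ) ≤ u / Δx := by
        have : n ≤ ⌊u / Δx⌋₊ := by omega
        calc (n:ℝ) ≤ (⌊u / Δx⌋₊ : ℝ) := by exact_mod_cast this
          _ ≤ u / Δx := hfloorle
      have h1u : 1 ≤ u := by
        have := (le_div_iff₀ hΔpos).1 hnm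
        linarith [hnΔ, this]
      have hu1' : u = 1 := le_antisymm hu2 h1u
      refine ⟨n, hn, le_rfl, ?_, ?_, ?_, (min_eq_left hcase.le).symm⟩
      · rw [hu1', ← hnΔ]; nlinarith
      · rw [hu1', ← hnΔ]
      · exact hsIcc u (by rw [hu1', ← hnΔ]; nlinarith) (by rw [hu1', ← hnΔ])
  -- the key Lipschitz-type estimate
  have key : ∀ x ∈ Set.Icc Δx 1, ∀ y ∈ Set.Icc Δx 1, y ≤ x →
      |(s x - w x) - (s y - w y)| ≤
        Real.sqrt (∫ ξ in Δx..1, (δ ξ - w' ξ)^2)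
          + 2 * Real.sqrt Δx * Real.sqrt (∫ ξ in (0:ℝ)..1, (w' ξ)^2) := by
    intro x hx y hy hyx
    obtain ⟨j, hj2, hjn, hjl, hjr, hjv, hjf⟩ := hidx x hx
    obtain ⟨k, hk2, hkn, hkl, hkr, hkv, hkf⟩ := hidx y hy
    have hkj : k ≤ j := by
      rw [hjf, hkf]
      have hdiv : y / Δx ≤ x / Δx := by
        rw [div_le_div_iff_of_pos_right hΔpos]; exact hyx
      exact min_le_min le_rfl (by
        have : ⌊y / Δx⌋₊ ≤ ⌊x / Δx⌋₊ := Nat.floor_le_floor hdiv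
        omega)
    have hkjR : (k:ℝ) ≤ (j:ℝ) := by exact_mod_cast hkj
    have hx01 : x ∈ Set.Icc (0:ℝ) 1 := ⟨le_trans hΔpos.le hx.1, hx.2⟩
    have hy01 : y ∈ Set.Icc (0:ℝ) 1 := ⟨le_trans hΔpos.le hy.1, hy.2⟩
    have hjI : ((j:ℝ) * Δx) ∈ Set.Icc (0:ℝ) 1 := hmemIcc j hjn
    have hkI : ((k:ℝ) * Δx) ∈ Set.Icc (0:ℝ) 1 := hmemIcc k hkn
    have hkjΔ : (k:ℝ) * Δx ≤ (j:ℝ) * Δx := by nlinarith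
    have hΔk : Δx ≤ (k:ℝ) * Δx := by
      have : (1:ℝ) ≤ (k:ℝ) := by exact_mod_cast le_trans one_le_two hk2
      nlinarith
    -- w x - w y
    have hwxy : w x - w y = ∫ ξ in y..x, w' ξ := by
      rw [hwAC x hx01, hwAC y hy01]
      have h := intervalIntegral.integral_interval_sub_left
        (hW 0 x ⟨le_rfl, zero_le_one⟩ hx01) (hW 0 y ⟨le_rfl, zero_le_one⟩ hy01)
      linarith [h]
    -- z j - z k
    obtain ⟨tj1, tj2, tj3⟩ := htel j (by omega) hjn
    obtain ⟨tk1, tk2, tk3⟩ := htel k (by omega) hkn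
    have hzz : (∫ ξ in ((k:ℝ) * Δx)..((j:ℝ) * Δx), δ ξ) = z j - z k := by
      have h := intervalIntegral.integral_interval_sub_left tj1 tk1
      rw [tj3, tk3] at h
      linarith [h]
    -- integrability on [kΔx, jΔx]
    have hsub : Set.uIcc ((k:ℝ) * Δx) ((j:ℝ) * Δx) ⊆ Set.uIcc Δx ((j:ℝ) * Δx) := by
      apply Set.uIcc_subset_uIcc
      · rw [Set.uIcc_of_le (le_trans hΔk hkjΔ)]; exact ⟨hΔk, hkjΔ⟩
      · rw [Set.uIcc_of_le (le_trans hΔk hkjΔ)]; exact ⟨le_trans hΔk hkjΔ, le_rfl⟩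
    have hδkj : IntervalIntegrable δ volume ((k:ℝ) * Δx) ((j:ℝ) * Δx) := tj1.mono_set hsub
    have hsqkj : IntervalIntegrable (fun ξ => (δ ξ - w' ξ)^2) volume
        ((k:ℝ) * Δx) ((j:ℝ) * Δx) := tj2.mono_set hsub
    have hWkj := hW _ _ hkI hjI
    -- splitting
    have e1 : (∫ ξ in ((k:ℝ) * Δx)..y, w' ξ) + (∫ ξ in y..((j:ℝ) * Δx), w' ξ)
        = ∫ ξ in ((k:ℝ) * Δx)..((j:ℝ) * Δx), w' ξ :=
      intervalIntegral.integral_add_adjacent_intervals (hW _ _ hkI hy01) (hW _ _ hy01 hjI)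
    have e2 : (∫ ξ in y..x, w' ξ) + (∫ ξ in x..((j:ℝ) * Δx), w' ξ)
        = ∫ ξ in y..((j:ℝ) * Δx), w' ξ :=
      intervalIntegral.integral_add_adjacent_intervals (hW _ _ hy01 hx01) (hW _ _ hx01 hjI)
    have esub : (∫ ξ in ((k:ℝ) * Δx)..((j:ℝ) * Δx), (δ ξ - w' ξ))
        = (∫ ξ in ((k:ℝ) * Δx)..((j:ℝ) * Δx), δ ξ)
          - ∫ ξ in ((k:ℝ) * Δx)..((j:ℝ) * Δx), w' ξ :=
      intervalIntegral.integral_sub hδkj hWkj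
    -- the decomposition of the difference
    have hE : (s x - w x) - (s y - w y)
        = (∫ ξ in ((k:ℝ) * Δx)..((j:ℝ) * Δx), (δ ξ - w' ξ))
          + (∫ ξ in ((k:ℝ) * Δx)..y, w' ξ)
          + (∫ ξ in x..((j:ℝ) * Δx), w' ξ) := by
      rw [hjv, hkv]
      have : z j - z k - (w x - w y)
          = (∫ ξ in ((k:ℝ) * Δx)..((j:ℝ) * Δx), (δ ξ - w' ξ))
          + (∫ ξ in ((k:ℝ) * Δx)..y, w' ξ)
          + (∫ ξ in x..((j:ℝ) * Δx), w' ξ) := by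
        rw [esub, hzz, hwxy]
        linarith [e1, e2]
      linarith [this]
    -- bounds
    have B1 : |∫ ξ in ((k:ℝ) * Δx)..((j:ℝ) * Δx), (δ ξ - w' ξ)|
        ≤ Real.sqrt (∫ ξ in Δx..1, (δ ξ - w' ξ)^2) := by
      have h := my_cs hkjΔ (hδkj.sub hWkj) hsqkj
      have hlen : Real.sqrt ((j:ℝ) * Δx - (k:ℝ) * Δx) ≤ 1 := by
        have hjR : (j:ℝ) ≤ (n:ℝ) := by exact_mod_cast hjn
        have h1 : (j:ℝ) * Δx - (k:ℝ) * Δx ≤ 1 := by nlinarith [hΔk]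
        calc Real.sqrt ((j:ℝ) * Δx - (k:ℝ) * Δx) ≤ Real.sqrt 1 := Real.sqrt_le_sqrt h1
          _ = 1 := Real.sqrt_one
      have hint : Real.sqrt (∫ ξ in ((k:ℝ) * Δx)..((j:ℝ) * Δx), (δ ξ - w' ξ)^2)
          ≤ Real.sqrt (∫ ξ in Δx..1, (δ ξ - w' ξ)^2) :=
        Real.sqrt_le_sqrt (hmono _ _ hΔk hkjΔ hjI.2)
      calc |∫ ξ in ((k:ℝ) * Δx)..((j:ℝ) * Δx), (δ ξ - w' ξ)|
          ≤ Real.sqrt ((j:ℝ) * Δx - (k:ℝ) * Δx)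
            * Real.sqrt (∫ ξ in ((k:ℝ) * Δx)..((j:ℝ) * Δx), (δ ξ - w' ξ)^2) := h
        _ ≤ 1 * Real.sqrt (∫ ξ in Δx..1, (δ ξ - w' ξ)^2) := by
            apply mul_le_mul hlen hint (Real.sqrt_nonneg _) zero_le_one
        _ = Real.sqrt (∫ ξ in Δx..1, (δ ξ - w' ξ)^2) := one_mul _
    have B2 : |∫ ξ in ((k:ℝ) * Δx)..y, w' ξ|
        ≤ Real.sqrt Δx * Real.sqrt (∫ ξ in (0:ℝ)..1, (w' ξ)^2) := by
      rw [intervalIntegral.integral_symm y ((k:ℝ) * Δx), abs_neg]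
      have h := my_cs hkr (hW _ _ hy01 hkI) (hW2 _ _ hy01 hkI)
      have hlen : Real.sqrt ((k:ℝ) * Δx - y) ≤ Real.sqrt Δx :=
        Real.sqrt_le_sqrt (by nlinarith [hkl])
      have hint : Real.sqrt (∫ ξ in y..((k:ℝ) * Δx), (w' ξ)^2)
          ≤ Real.sqrt (∫ ξ in (0:ℝ)..1, (w' ξ)^2) :=
        Real.sqrt_le_sqrt (hmonoW _ _ hy01.1 hkr hkI.2)
      calc |∫ ξ in y..((k:ℝ) * Δx), w' ξ|
          ≤ Real.sqrt ((k:ℝ) * Δx - y) * Real.sqrt (∫ ξ in y..((k:ℝ) * Δx), (w' ξ)^2) := h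
        _ ≤ Real.sqrt Δx * Real.sqrt (∫ ξ in (0:ℝ)..1, (w' ξ)^2) :=
            mul_le_mul hlen hint (Real.sqrt_nonneg _) (Real.sqrt_nonneg _)
    have B3 : |∫ ξ in x..((j:ℝ) * Δx), w' ξ|
        ≤ Real.sqrt Δx * Real.sqrt (∫ ξ in (0:ℝ)..1, (w' ξ)^2) := by
      have h := my_cs hjr (hW _ _ hx01 hjI) (hW2 _ _ hx01 hjI)
      have hlen : Real.sqrt ((j:ℝ) * Δx - x) ≤ Real.sqrt Δx :=
        Real.sqrt_le_sqrt (by nlinarith [hjl])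
      have hint : Real.sqrt (∫ ξ in x..((j:ℝ) * Δx), (w' ξ)^2)
          ≤ Real.sqrt (∫ ξ in (0:ℝ)..1, (w' ξ)^2) :=
        Real.sqrt_le_sqrt (hmonoW _ _ hx01.1 hjr hjI.2)
      calc |∫ ξ in x..((j:ℝ) * Δx), w' ξ|
          ≤ Real.sqrt ((j:ℝ) * Δx - x) * Real.sqrt (∫ ξ in x..((j:ℝ) * Δx), (w' ξ)^2) := h
        _ ≤ Real.sqrt Δx * Real.sqrt (∫ ξ in (0:ℝ)..1, (w' ξ)^2) :=
            mul_le_mul hlen hint (Real.sqrt_nonneg _) (Real.sqrt_nonneg _)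
    rw [hE]
    calc |(∫ ξ in ((k:ℝ) * Δx)..((j:ℝ) * Δx), (δ ξ - w' ξ))
          + (∫ ξ in ((k:ℝ) * Δx)..y, w' ξ) + (∫ ξ in x..((j:ℝ) * Δx), w' ξ)|
        ≤ |(∫ ξ in ((k:ℝ) * Δx)..((j:ℝ) * Δx), (δ ξ - w' ξ))
          + (∫ ξ in ((k:ℝ) * Δx)..y, w' ξ)| + |∫ ξ in x..((j:ℝ) * Δx), w' ξ| := abs_add_le _ _
      _ ≤ |(∫ ξ in ((k:ℝ) * Δx)..((j:ℝ) * Δx), (δ ξ - w' ξ))|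
          + |(∫ ξ in ((k:ℝ) * Δx)..y, w' ξ)| + |∫ ξ in x..((j:ℝ) * Δx), w' ξ| := by
          linarith [abs_add_le (∫ ξ in ((k:ℝ) * Δx)..((j:ℝ) * Δx), (δ ξ - w' ξ))
            (∫ ξ in ((k:ℝ) * Δx)..y, w' ξ)]
      _ ≤ Real.sqrt (∫ ξ in Δx..1, (δ ξ - w' ξ)^2)
          + 2 * Real.sqrt Δx * Real.sqrt (∫ ξ in (0:ℝ)..1, (w' ξ)^2) := by
          linarith [B1, B2, B3]
  -- conclusion
  intro x hx y hy
  have hgoal1 : (∫ ξ in Δx..1, ((s ξ - s (ξ - Δx)) / Δx - w' ξ)^2)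
      = ∫ ξ in Δx..1, (δ ξ - w' ξ)^2 := by simp only [hδdef]
  rw [hgoal1]
  have habs : |(s x - w x) - (s y - w y)| ≤
      Real.sqrt (∫ ξ in Δx..1, (δ ξ - w' ξ)^2)
        + 2 * Real.sqrt Δx * Real.sqrt (∫ ξ in (0:ℝ)..1, (w' ξ)^2) := by
    rcases le_total y x with h | h
    · exact key x hx y hy h
    · rw [abs_sub_comm]; exact key y hy x hx h
  set a := s x - w x with ha
  set b := s y - w y with hb
  have hmid : 0 ≤ Real.sqrt (∫ ξ in Δx..1, (w' ξ - w' (ξ - Δx))^2) := Real.sqrt_nonneg _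
  have h1 : a^2 - b^2 ≤ |a - b| * (|a| + |b|) := by
    have hfac : a^2 - b^2 = (a - b) * (a + b) := by ring
    calc a^2 - b^2 ≤ |a^2 - b^2| := le_abs_self _
      _ = |a - b| * |a + b| := by rw [hfac, abs_mul]
      _ ≤ |a - b| * (|a| + |b|) := mul_le_mul_of_nonneg_left (abs_add_le a b) (abs_nonneg _)
  have h2 : |a - b| * (|a| + |b|)
      ≤ (Real.sqrt (∫ ξ in Δx..1, (δ ξ - w' ξ)^2)
          + Real.sqrt (∫ ξ in Δx..1, (w' ξ - w' (ξ - Δx))^2)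
          + 2 * Real.sqrt Δx * Real.sqrt (∫ ξ in (0:ℝ)..1, (w' ξ)^2)) * (|a| + |b|) := by
    apply mul_le_mul_of_nonneg_right _ (by positivity)
    linarith [habs, hmid]
  linarith [h1, h2]
end
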